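/- arXiv:2312.02024 — 3 statements merged into one kernel-verified Lean document; each statement's English description precedes it below -/
import Mathlib

section
/- Let A, B, C be an affinely independent triple in the Euclidean plane with incenter I = (a·A + b·B + c·C)/(2s) (where a = dist B C, b = dist C A, c = dist A B, s = (a+b+c)/2) and orthocenter H, and let N_a = ((s−a)·A + (s−b)·B + (s−c)·C)/s be the Nagel point. Let H_A, H_B, H_C be the orthocenters of triangles BIC, CIA, AIB, let O_a, O_b, O_c be the circumcenters of triangles H_A B C, H_B C A, H_C A B respectively (each triple assumed affinely independent), and assume O_a, O_b, O_c are affinely independent with circumcenter O_f. Then N_a is the antipode of H on the circumcircle of triangle O_a O_b O_c, i.e., O_f is the midpoint of H and N_a. -/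
open EuclideanGeometry
open scoped InnerProductSpace

/-- The orthocenter of the triangle with vertices `A`, `B`, `C`. -/
noncomputable def orthocenter3 (A B C : EuclideanSpace ℝ (Fin 2))
    (h : AffineIndependent ℝ ![A, B, C]) : EuclideanSpace ℝ (Fin 2) :=
  Affine.Triangle.orthocenter ⟨![A, B, C], h⟩

/-- The circumcenter of the triangle with vertices `A`, `B`, `C`. -/
noncomputable def circumcenter3 (A B C : EuclideanSpace ℝ (Fin 2))
    (h : AffineIndependent ℝ ![A, B, C]) : EuclideanSpace ℝ (Fin 2) :=
  Affine.Simplex.circumcenter ⟨![A, B, C], h⟩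

/-- The circumradius of the triangle with vertices `A`, `B`, `C`. -/
noncomputable def circumradius3 (A B C : EuclideanSpace ℝ (Fin 2))
    (h : AffineIndependent ℝ ![A, B, C]) : ℝ :=
  Affine.Simplex.circumradius ⟨![A, B, C], h⟩

section Helpers

lemma dist_sq2 (x y : EuclideanSpace ℝ (Fin 2)) :
    dist x y ^ 2 = (x 0 - y 0)^2 + (x 1 - y 1)^2 := by
  rw [EuclideanSpace.dist_eq, Real.sq_sqrt (by positivity)]
  simp [Fin.sum_univ_two, Real.dist_eq, sq_abs]

lemma dist_eq_of_sq2 {x y z w : EuclideanSpace ℝ (Fin 2)}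
    (h : (x 0 - y 0)^2 + (x 1 - y 1)^2 = (z 0 - w 0)^2 + (z 1 - w 1)^2) :
    dist x y = dist z w := by
  have h2 : dist x y ^ 2 = dist z w ^ 2 := by rw [dist_sq2, dist_sq2, h]
  exact (sq_eq_sq₀ dist_nonneg dist_nonneg).mp h2

lemma span_top3 {P Q R : EuclideanSpace ℝ (Fin 2)} (h : AffineIndependent ℝ ![P, Q, R]) :
    affineSpan ℝ (Set.range ![P, Q, R]) = ⊤ := by
  rw [h.affineSpan_eq_top_iff_card_eq_finrank_add_one]
  simp [finrank_euclideanSpace]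

lemma eq_circumcenter3 {P Q R p : EuclideanSpace ℝ (Fin 2)} (h : AffineIndependent ℝ ![P, Q, R])
    (h1 : (P 0 - p 0)^2 + (P 1 - p 1)^2 = (Q 0 - p 0)^2 + (Q 1 - p 1)^2)
    (h2 : (P 0 - p 0)^2 + (P 1 - p 1)^2 = (R 0 - p 0)^2 + (R 1 - p 1)^2) :
    p = circumcenter3 P Q R h := by
  apply Affine.Simplex.eq_circumcenter_of_dist_eq (⟨![P,Q,R],h⟩ : Affine.Simplex ℝ _ 2)
    (r := dist P p)
  · rw [show Set.range (⟨![P,Q,R],h⟩ : Affine.Simplex ℝ _ 2).points = Set.range ![P,Q,R] from rfl,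
      span_top3 h]
    exact AffineSubspace.mem_top _ _ _
  · intro i
    fin_cases i
    · rfl
    · exact (dist_eq_of_sq2 h1).symm ▸ rfl
    · exact (dist_eq_of_sq2 h2).symm ▸ rfl

lemma circumcenter3_dist_eq {P Q R : EuclideanSpace ℝ (Fin 2)}
    (h : AffineIndependent ℝ ![P, Q, R]) :
    dist (circumcenter3 P Q R h) P = dist (circumcenter3 P Q R h) Q ∧
    dist (circumcenter3 P Q R h) P = dist (circumcenter3 P Q R h) R := by
  have h0 := Affine.Simplex.dist_circumcenter_eq_circumradius'
    (⟨![P,Q,R],h⟩ : Affine.Simplex ℝ (EuclideanSpace ℝ (Fin 2)) 2) 0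
  have h1 := Affine.Simplex.dist_circumcenter_eq_circumradius'
    (⟨![P,Q,R],h⟩ : Affine.Simplex ℝ (EuclideanSpace ℝ (Fin 2)) 2) 1
  have h2 := Affine.Simplex.dist_circumcenter_eq_circumradius'
    (⟨![P,Q,R],h⟩ : Affine.Simplex ℝ (EuclideanSpace ℝ (Fin 2)) 2) 2
  exact ⟨h0.trans h1.symm, h0.trans h2.symm⟩

lemma centroid3 (A B C : EuclideanSpace ℝ (Fin 2)) :
    (Finset.univ : Finset (Fin 3)).centroid ℝ ![A, B, C]
      = (3:ℝ)⁻¹ • A + (3:ℝ)⁻¹ • B + (3:ℝ)⁻¹ • C := by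
  rw [Finset.centroid_def,
    Finset.affineCombination_eq_linear_combination _ _ _ (by simp [Finset.centroidWeights])]
  simp [Fin.sum_univ_three, Finset.centroidWeights]

lemma orthocenter3_coord (A B C : EuclideanSpace ℝ (Fin 2))
    (h : AffineIndependent ℝ ![A, B, C]) (i : Fin 2) :
    orthocenter3 A B C h i = A i + B i + C i - 2 * circumcenter3 A B C h i := by
  have hoc := Affine.Triangle.orthocenter_eq_smul_vsub_vadd_circumcenter
    (⟨![A, B, C], h⟩ : Affine.Triangle ℝ (EuclideanSpace ℝ (Fin 2)))
  rw [orthocenter3, hoc]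
  rw [show (⟨![A,B,C],h⟩ : Affine.Triangle ℝ (EuclideanSpace ℝ (Fin 2))).points = ![A,B,C] from rfl]
  rw [centroid3]
  simp only [vsub_eq_sub, vadd_eq_add, circumcenter3]
  simp [PiLp.add_apply, PiLp.sub_apply, PiLp.smul_apply, smul_eq_mul]
  ring

lemma strict_tri {X Y Z : EuclideanSpace ℝ (Fin 2)}
    (h : ¬Collinear ℝ ({X, Y, Z} : Set (EuclideanSpace ℝ (Fin 2)))) :
    dist X Z < dist X Y + dist Y Z := by
  rcases lt_or_eq_of_le (dist_triangle X Y Z) with h' | h'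
  · exact h'
  · exact absurd (dist_add_dist_eq_iff.1 h'.symm).collinear h

end Helpers


lemma key1 (A0 A1 B0 B1 C0 C1 a b c ma0 ma1 : ℝ)
    (ha2 : a^2 = (B0-C0)^2+(B1-C1)^2) (hb2 : b^2 = (C0-A0)^2+(C1-A1)^2)
    (hc2 : c^2 = (A0-B0)^2+(A1-B1)^2)
    (hma0 : (a+b+c)*(-a+b+c)*ma0 = -a^2*A0+b*(b+c)*B0+c*(b+c)*C0)
    (hma1 : (a+b+c)*(-a+b+c)*ma1 = -a^2*A1+b*(b+c)*B1+c*(b+c)*C1)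
    (h1 : 0 < a+b+c) (h2 : 0 < -a+b+c) :
    (ma0-B0)^2+(ma1-B1)^2 = (ma0-C0)^2+(ma1-C1)^2 := by
  have hTU : ((a+b+c)*(-a+b+c)) ≠ 0 := ne_of_gt (mul_pos h1 h2)
  have hK : ((a+b+c)*(-a+b+c))*((a+b+c)*(-a+b+c)) ≠ 0 := mul_ne_zero hTU hTU
  have key : ((a+b+c)*(-a+b+c))*((a+b+c)*(-a+b+c)) * ((ma0-B0)^2+(ma1-B1)^2)
      = ((a+b+c)*(-a+b+c))*((a+b+c)*(-a+b+c)) * ((ma0-C0)^2+(ma1-C1)^2) := by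
    linear_combination (2*C0*c^2 + 4*C0*b*c + 2*C0*b^2 - 2*C0*a^2 - 2*B0*c^2 - 4*B0*b*c - 2*B0*b^2 + 2*B0*a^2) * hma0 + (2*C1*c^2 + 4*C1*b*c + 2*C1*b^2 - 2*C1*a^2 - 2*B1*c^2 - 4*B1*b*c - 2*B1*b^2 + 2*B1*a^2) * hma1 + (2*C1^2*b*c + 2*C1^2*b^2 - 1*C1^2*a^2 - 1*C1^4 + 2*C0^2*b*c + 2*C0^2*b^2 - 1*C0^2*a^2 - 2*C0^2*C1^2 - 1*C0^4 + 2*B1*C1*c^2 - 2*B1*C1*b^2 + 2*B1*C1^3 + 2*B1*C0^2*C1 - 2*B1^2*c^2 - 2*B1^2*b*c + 1*B1^2*a^2 - 2*B1^3*C1 + 1*B1^4 + 2*B0*C0*c^2 - 2*B0*C0*b^2 + 2*B0*C0*C1^2 + 2*B0*C0^3 - 2*B0*B1^2*C0 - 2*B0^2*c^2 - 2*B0^2*b*c + 1*B0^2*a^2 - 2*B0^2*B1*C1 + 2*B0^2*B1^2 - 2*B0^3*C0 + 1*B0^4 - 2*A1*C1*c^2 - 4*A1*C1*b*c - 2*A1*C1*b^2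 + 2*A1*C1*a^2 + 2*A1*C1^3 + 2*A1*C0^2*C1 + 2*A1*B1*c^2 + 4*A1*B1*b*c + 2*A1*B1*b^2 - 2*A1*B1*a^2 - 6*A1*B1*C1^2 - 2*A1*B1*C0^2 + 6*A1*B1^2*C1 - 2*A1*B1^3 - 4*A1*B0*C0*C1 + 4*A1*B0*B1*C0 + 2*A1*B0^2*C1 - 2*A1*B0^2*B1 - 2*A0*C0*c^2 - 4*A0*C0*b*c - 2*A0*C0*b^2 + 2*A0*C0*a^2 + 2*A0*C0*C1^2 + 2*A0*C0^3 - 4*A0*B1*C0*C1 + 2*A0*B1^2*C0 + 2*A0*B0*c^2 + 4*A0*B0*b*c + 2*A0*B0*b^2 - 2*A0*B0*a^2 - 2*A0*B0*C1^2 - 6*A0*B0*C0^2 + 4*A0*B0*B1*C1 - 2*A0*B0*B1^2 + 6*A0*B0^2*C0 - 2*A0*B0^3) * ha2 + (-2*C1^2*b*c - 1*C1^2*b^2 + 1*C1^4 - 2*C0^2*b*c - 1*C0^2*b^2 + 2*C0^2*C1^2 + 1*C0^4 + 4*B1*C1*b*c + 2*B1*C1*b^2 - 4*B1*C1^3 -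 4*B1*C0^2*C1 - 2*B1^2*b*c - 1*B1^2*b^2 + 5*B1^2*C1^2 + 1*B1^2*C0^2 - 2*B1^3*C1 + 4*B0*C0*b*c + 2*B0*C0*b^2 - 4*B0*C0*C1^2 - 4*B0*C0^3 + 8*B0*B1*C0*C1 - 2*B0*B1^2*C0 - 2*B0^2*b*c - 1*B0^2*b^2 + 1*B0^2*C1^2 + 5*B0^2*C0^2 - 2*B0^2*B1*C1 - 2*B0^3*C0 + 2*A1*B1*C1^2 + 2*A1*B1*C0^2 - 4*A1*B1^2*C1 + 2*A1*B1^3 - 4*A1*B0*B1*C0 + 2*A1*B0^2*B1 - 1*A1^2*C1^2 - 1*A1^2*C0^2 + 2*A1^2*B1*C1 - 1*A1^2*B1^2 + 2*A1^2*B0*C0 - 1*A1^2*B0^2 + 2*A0*B0*C1^2 + 2*A0*B0*C0^2 - 4*A0*B0*B1*C1 + 2*A0*B0*B1^2 - 4*A0*B0^2*C0 + 2*A0*B0^3 - 1*A0^2*C1^2 - 1*A0^2*C0^2 + 2*A0^2*B1*C1 - 1*A0^2*B1^2 + 2*A0^2*B0*C0 - 1*A0^2*B0^2) * hb2 + (1*C1^2*c^2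 + 2*C1^2*b*c + 1*C0^2*c^2 + 2*C0^2*b*c - 2*B1*C1*c^2 - 4*B1*C1*b*c + 2*B1*C1^3 + 2*B1*C0^2*C1 + 1*B1^2*c^2 + 2*B1^2*b*c - 5*B1^2*C1^2 - 1*B1^2*C0^2 + 4*B1^3*C1 - 1*B1^4 - 2*B0*C0*c^2 - 4*B0*C0*b*c + 2*B0*C0*C1^2 + 2*B0*C0^3 - 8*B0*B1*C0*C1 + 4*B0*B1^2*C0 + 1*B0^2*c^2 + 2*B0^2*b*c - 1*B0^2*C1^2 - 5*B0^2*C0^2 + 4*B0^2*B1*C1 - 2*B0^2*B1^2 + 4*B0^3*C0 - 1*B0^4 - 2*A1*C1^3 - 2*A1*C0^2*C1 + 4*A1*B1*C1^2 - 2*A1*B1^2*C1 + 4*A1*B0*C0*C1 - 2*A1*B0^2*C1 + 1*A1^2*C1^2 + 1*A1^2*C0^2 - 2*A1^2*B1*C1 + 1*A1^2*B1^2 - 2*A1^2*B0*C0 + 1*A1^2*B0^2 - 2*A0*C0*C1^2 - 2*A0*C0^3 + 4*A0*B1*C0*C1 - 2*A0*B1^2*C0 + 4*A0*B0*C0^2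 - 2*A0*B0^2*C0 + 1*A0^2*C1^2 + 1*A0^2*C0^2 - 2*A0^2*B1*C1 + 1*A0^2*B1^2 - 2*A0^2*B0*C0 + 1*A0^2*B0^2) * hc2
  exact mul_left_cancel₀ hK key

lemma key2 (A0 A1 B0 B1 C0 C1 a b c ma0 ma1 i0 i1 : ℝ)
    (ha2 : a^2 = (B0-C0)^2+(B1-C1)^2) (hb2 : b^2 = (C0-A0)^2+(C1-A1)^2)
    (hc2 : c^2 = (A0-B0)^2+(A1-B1)^2)
    (hma0 : (a+b+c)*(-a+b+c)*ma0 = -a^2*A0+b*(b+c)*B0+c*(b+c)*C0)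
    (hma1 : (a+b+c)*(-a+b+c)*ma1 = -a^2*A1+b*(b+c)*B1+c*(b+c)*C1)
    (hi0 : (a+b+c)*i0 = a*A0+b*B0+c*C0) (hi1 : (a+b+c)*i1 = a*A1+b*B1+c*C1)
    (h1 : 0 < a+b+c) (h2 : 0 < -a+b+c) :
    (ma0-B0)^2+(ma1-B1)^2 = (ma0-i0)^2+(ma1-i1)^2 := by
  have hTU : ((a+b+c)*(-a+b+c)) ≠ 0 := ne_of_gt (mul_pos h1 h2)
  have hK : ((a+b+c)*(-a+b+c))^2 ≠ 0 := pow_ne_zero 2 hTU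
  have key : ((a+b+c)*(-a+b+c))^2 * ((ma0-B0)^2+(ma1-B1)^2)
      = ((a+b+c)*(-a+b+c))^2 * ((ma0-i0)^2+(ma1-i1)^2) := by
    linear_combination (1*c^2*i0 + 2*b*c*i0 + 1*b^2*i0 - 1*a^2*i0 + 1*C0*c^2 + 1*C0*b*c - 1*C0*a*c - 2*B0*c^2 - 3*B0*b*c - 1*B0*b^2 - 1*B0*a*b + 2*B0*a^2 + 1*A0*a*c + 1*A0*a*b - 1*A0*a^2) * hma0 + (1*c^2*i1 + 2*b*c*i1 + 1*b^2*i1 - 1*a^2*i1 + 1*C1*c^2 + 1*C1*b*c - 1*C1*a*c - 2*B1*c^2 - 3*B1*b*c - 1*B1*b^2 - 1*B1*a*b + 2*B1*a^2 + 1*A1*a*c + 1*A1*a*b - 1*A1*a^2) * hma1 + (-1*c^3*i0 + 1*c^3*ma0 - 3*b*c^2*i0 + 3*b*c^2*ma0 - 3*b^2*c*i0 + 3*b^2*c*ma0 - 1*b^3*i0 + 1*b^3*ma0 + 1*a*c^2*i0 - 1*a*c^2*ma0 + 2*a*b*c*i0 - 2*a*b*c*ma0 + 1*a*b^2*i0 -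 1*a*b^2*ma0 + 1*a^2*c*i0 - 1*a^2*c*ma0 + 1*a^2*b*i0 - 1*a^2*b*ma0 - 1*a^3*i0 + 1*a^3*ma0 + 1*C0*a*c^2 + 1*C0*a*b*c - 1*C0*a^2*c + 1*B0*a*b*c + 1*B0*a*b^2 - 1*B0*a^2*b - 1*A0*a*c^2 - 2*A0*a*b*c - 1*A0*a*b^2 + 1*A0*a^2*c + 1*A0*a^2*b) * hi0 + (-1*c^3*i1 + 1*c^3*ma1 - 3*b*c^2*i1 + 3*b*c^2*ma1 - 3*b^2*c*i1 + 3*b^2*c*ma1 - 1*b^3*i1 + 1*b^3*ma1 + 1*a*c^2*i1 - 1*a*c^2*ma1 + 2*a*b*c*i1 - 2*a*b*c*ma1 + 1*a*b^2*i1 - 1*a*b^2*ma1 + 1*a^2*c*i1 - 1*a^2*c*ma1 + 1*a^2*b*i1 - 1*a^2*b*ma1 - 1*a^3*i1 + 1*a^3*ma1 + 1*C1*a*c^2 + 1*C1*a*b*c - 1*C1*a^2*c + 1*B1*a*b*c + 1*B1*a*b^2 - 1*B1*a^2*b - 1*A1*a*c^2 - 2*A1*a*b*c - 1*A1*a*b^2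 + 1*A1*a^2*c + 1*A1*a^2*b) * hi1 + (-1*C1^2*c^2 - 1*C0^2*c^2 + 2*B1*C1*c^2 - 2*B1^2*c^2 - 2*B1^2*b*c - 1*B1^2*b^2 + 1*B1^2*a^2 + 1*B1^2*C1^2 + 1*B1^2*C0^2 - 2*B1^3*C1 + 1*B1^4 + 2*B0*C0*c^2 - 2*B0*B1^2*C0 - 2*B0^2*c^2 - 2*B0^2*b*c - 1*B0^2*b^2 + 1*B0^2*a^2 + 1*B0^2*C1^2 + 1*B0^2*C0^2 - 2*B0^2*B1*C1 + 2*B0^2*B1^2 - 2*B0^3*C0 + 1*B0^4 + 2*A1*B1*c^2 + 4*A1*B1*b*c + 2*A1*B1*b^2 - 2*A1*B1*a^2 - 2*A1*B1*C1^2 - 2*A1*B1*C0^2 + 4*A1*B1^2*C1 - 2*A1*B1^3 + 4*A1*B0*B1*C0 - 2*A1*B0^2*B1 - 1*A1^2*c^2 - 2*A1^2*b*c - 1*A1^2*b^2 + 1*A1^2*a^2 + 1*A1^2*C1^2 + 1*A1^2*C0^2 - 2*A1^2*B1*C1 + 1*A1^2*B1^2 - 2*A1^2*B0*C0 + 1*A1^2*B0^2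 + 2*A0*B0*c^2 + 4*A0*B0*b*c + 2*A0*B0*b^2 - 2*A0*B0*a^2 - 2*A0*B0*C1^2 - 2*A0*B0*C0^2 + 4*A0*B0*B1*C1 - 2*A0*B0*B1^2 + 4*A0*B0^2*C0 - 2*A0*B0^3 - 1*A0^2*c^2 - 2*A0^2*b*c - 1*A0^2*b^2 + 1*A0^2*a^2 + 1*A0^2*C1^2 + 1*A0^2*C0^2 - 2*A0^2*B1*C1 + 1*A0^2*B1^2 - 2*A0^2*B0*C0 + 1*A0^2*B0^2) * ha2 + (1*C1^2*c^2 + 1*C0^2*c^2 - 2*B1*C1*c^2 + 1*B1^2*c^2 - 1*B1^2*C1^2 - 1*B1^2*C0^2 + 2*B1^3*C1 - 1*B1^4 - 2*B0*C0*c^2 + 2*B0*B1^2*C0 + 1*B0^2*c^2 - 1*B0^2*C1^2 - 1*B0^2*C0^2 + 2*B0^2*B1*C1 - 2*B0^2*B1^2 + 2*B0^3*C0 - 1*B0^4 + 2*A1*B1*C1^2 + 2*A1*B1*C0^2 - 4*A1*B1^2*C1 + 2*A1*B1^3 - 4*A1*B0*B1*C0 + 2*A1*B0^2*B1 - 1*A1^2*C1^2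 - 1*A1^2*C0^2 + 2*A1^2*B1*C1 - 1*A1^2*B1^2 + 2*A1^2*B0*C0 - 1*A1^2*B0^2 + 2*A0*B0*C1^2 + 2*A0*B0*C0^2 - 4*A0*B0*B1*C1 + 2*A0*B0*B1^2 - 4*A0*B0^2*C0 + 2*A0*B0^3 - 1*A0^2*C1^2 - 1*A0^2*C0^2 + 2*A0^2*B1*C1 - 1*A0^2*B1^2 + 2*A0^2*B0*C0 - 1*A0^2*B0^2) * hb2 + (1*C1^2*c^2 + 2*C1^2*b*c + 1*C0^2*c^2 + 2*C0^2*b*c - 2*B1*C1*c^2 - 4*B1*C1*b*c + 2*B1*C1^3 + 2*B1*C0^2*C1 + 1*B1^2*c^2 + 2*B1^2*b*c - 5*B1^2*C1^2 - 1*B1^2*C0^2 + 4*B1^3*C1 - 1*B1^4 - 2*B0*C0*c^2 - 4*B0*C0*b*c + 2*B0*C0*C1^2 + 2*B0*C0^3 - 8*B0*B1*C0*C1 + 4*B0*B1^2*C0 + 1*B0^2*c^2 + 2*B0^2*b*c - 1*B0^2*C1^2 - 5*B0^2*C0^2 + 4*B0^2*B1*C1 - 2*B0^2*B1^2 + 4*B0^3*C0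 - 1*B0^4 - 2*A1*C1^3 - 2*A1*C0^2*C1 + 4*A1*B1*C1^2 - 2*A1*B1^2*C1 + 4*A1*B0*C0*C1 - 2*A1*B0^2*C1 + 1*A1^2*C1^2 + 1*A1^2*C0^2 - 2*A1^2*B1*C1 + 1*A1^2*B1^2 - 2*A1^2*B0*C0 + 1*A1^2*B0^2 - 2*A0*C0*C1^2 - 2*A0*C0^3 + 4*A0*B1*C0*C1 - 2*A0*B1^2*C0 + 4*A0*B0*C0^2 - 2*A0*B0^2*C0 + 1*A0^2*C1^2 + 1*A0^2*C0^2 - 2*A0^2*B1*C1 + 1*A0^2*B1^2 - 2*A0^2*B0*C0 + 1*A0^2*B0^2) * hc2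
  exact mul_left_cancel₀ hK key

lemma keyf1 (A0 A1 B0 B1 C0 C1 a b c ma0 ma1 o0 o1 : ℝ)
    (ha2 : a^2 = (B0-C0)^2+(B1-C1)^2) (hb2 : b^2 = (C0-A0)^2+(C1-A1)^2)
    (hc2 : c^2 = (A0-B0)^2+(A1-B1)^2)
    (hma0 : (a+b+c)*(-a+b+c)*ma0 = -a^2*A0+b*(b+c)*B0+c*(b+c)*C0)
    (hma1 : (a+b+c)*(-a+b+c)*ma1 = -a^2*A1+b*(b+c)*B1+c*(b+c)*C1)
    (hO1 : (o0-A0)^2+(o1-A1)^2 = (o0-B0)^2+(o1-B1)^2)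
    (hO2 : (o0-A0)^2+(o1-A1)^2 = (o0-C0)^2+(o1-C1)^2)
    (h1 : 0 < a+b+c) (h2 : 0 < -a+b+c) :
    (o0-ma0)^2+(o1-ma1)^2 = (o0-A0)^2+(o1-A1)^2 := by
  have hTU : ((a+b+c)*(-a+b+c)) ≠ 0 := ne_of_gt (mul_pos h1 h2)
  have hK : ((a+b+c)*(-a+b+c))^2 ≠ 0 := pow_ne_zero 2 hTU
  have key : ((a+b+c)*(-a+b+c))^2 * ((o0-ma0)^2+(o1-ma1)^2)
      = ((a+b+c)*(-a+b+c))^2 * ((o0-A0)^2+(o1-A1)^2) := by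
    linear_combination (-2*c^2*o0 + 1*c^2*ma0 - 4*b*c*o0 + 2*b*c*ma0 - 2*b^2*o0 + 1*b^2*ma0 + 2*a^2*o0 - 1*a^2*ma0 + 1*C0*c^2 + 1*C0*b*c + 1*B0*b*c + 1*B0*b^2 - 1*A0*a^2) * hma0 + (-2*c^2*o1 + 1*c^2*ma1 - 4*b*c*o1 + 2*b*c*ma1 - 2*b^2*o1 + 1*b^2*ma1 + 2*a^2*o1 - 1*a^2*ma1 + 1*C1*c^2 + 1*C1*b*c + 1*B1*b*c + 1*B1*b^2 - 1*A1*a^2) * hma1 + (-1*b*c^3 - 3*b^2*c^2 - 3*b^3*c - 1*b^4 + 1*a^2*b*c + 1*a^2*b^2) * hO1 + (-1*c^4 - 3*b*c^3 - 3*b^2*c^2 - 1*b^3*c + 1*a^2*c^2 + 1*a^2*b*c) * hO2 + (1*C1^2*c^2 + 1*C1^2*b*c + 1*C0^2*c^2 + 1*C0^2*b*c + 1*B1^2*b*c + 1*B1^2*b^2 + 1*B0^2*b*c + 1*B0^2*b^2 - 2*A1*C1*c^2 - 2*A1*C1*b*c - 2*A1*B1*b*c - 2*A1*B1*b^2 +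 1*A1^2*c^2 + 2*A1^2*b*c + 1*A1^2*b^2 - 2*A0*C0*c^2 - 2*A0*C0*b*c - 2*A0*B0*b*c - 2*A0*B0*b^2 + 1*A0^2*c^2 + 2*A0^2*b*c + 1*A0^2*b^2) * ha2 + (-2*C1^2*c^2 - 1*C1^2*b*c - 2*C0^2*c^2 - 1*C0^2*b*c + 4*B1*C1*c^2 + 2*B1*C1*b*c - 2*B1^2*c^2 - 1*B1^2*b*c + 1*B1^2*C1^2 + 1*B1^2*C0^2 - 2*B1^3*C1 + 1*B1^4 + 4*B0*C0*c^2 + 2*B0*C0*b*c - 2*B0*B1^2*C0 - 2*B0^2*c^2 - 1*B0^2*b*c + 1*B0^2*C1^2 + 1*B0^2*C0^2 - 2*B0^2*B1*C1 + 2*B0^2*B1^2 - 2*B0^3*C0 + 1*B0^4 - 2*A1*B1*C1^2 - 2*A1*B1*C0^2 + 4*A1*B1^2*C1 - 2*A1*B1^3 + 4*A1*B0*B1*C0 - 2*A1*B0^2*B1 + 1*A1^2*C1^2 + 1*A1^2*C0^2 - 2*A1^2*B1*C1 + 1*A1^2*B1^2 - 2*A1^2*B0*C0 + 1*A1^2*B0^2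 - 2*A0*B0*C1^2 - 2*A0*B0*C0^2 + 4*A0*B0*B1*C1 - 2*A0*B0*B1^2 + 4*A0*B0^2*C0 - 2*A0*B0^3 + 1*A0^2*C1^2 + 1*A0^2*C0^2 - 2*A0^2*B1*C1 + 1*A0^2*B1^2 - 2*A0^2*B0*C0 + 1*A0^2*B0^2) * hb2 + (-1*C1^2*b*c - 1*C1^4 - 1*C0^2*b*c - 2*C0^2*C1^2 - 1*C0^4 + 2*B1*C1*b*c + 2*B1*C1^3 + 2*B1*C0^2*C1 - 1*B1^2*b*c - 1*B1^2*C1^2 - 1*B1^2*C0^2 + 2*B0*C0*b*c + 2*B0*C0*C1^2 + 2*B0*C0^3 - 1*B0^2*b*c - 1*B0^2*C1^2 - 1*B0^2*C0^2 + 2*A1*C1^3 + 2*A1*C0^2*C1 - 4*A1*B1*C1^2 + 2*A1*B1^2*C1 - 4*A1*B0*C0*C1 + 2*A1*B0^2*C1 - 1*A1^2*C1^2 - 1*A1^2*C0^2 + 2*A1^2*B1*C1 - 1*A1^2*B1^2 + 2*A1^2*B0*C0 - 1*A1^2*B0^2 + 2*A0*C0*C1^2 + 2*A0*C0^3 - 4*A0*B1*C0*C1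 + 2*A0*B1^2*C0 - 4*A0*B0*C0^2 + 2*A0*B0^2*C0 - 1*A0^2*C1^2 - 1*A0^2*C0^2 + 2*A0^2*B1*C1 - 1*A0^2*B1^2 + 2*A0^2*B0*C0 - 1*A0^2*B0^2) * hc2
  exact mul_left_cancel₀ hK key

lemma keyOrth (A0 A1 B0 B1 C0 C1 a b c ma0 ma1 i0 i1 na0 na1 o0 o1 oa0 oa1 h0 h1 : ℝ)
    (hf1 : (o0-ma0)^2+(o1-ma1)^2 = (o0-A0)^2+(o1-A1)^2)
    (hf2 : (b+c)*(i0-A0) = (-a+b+c)*(ma0-A0))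
    (hf3 : (b+c)*(i1-A1) = (-a+b+c)*(ma1-A1))
    (hnn0 : na0 = A0+B0+C0-2*i0) (hnn1 : na1 = A1+B1+C1-2*i1)
    (hoa0 : oa0 = B0+C0-ma0) (hoa1 : oa1 = B1+C1-ma1)
    (hh0 : h0 = A0+B0+C0-2*o0) (hh1 : h1 = A1+B1+C1-2*o1)
    (hbc : 0 < b+c) :
    (oa0-h0)*(oa0-na0)+(oa1-h1)*(oa1-na1) = 0 := by
  have hK : (b+c) ≠ 0 := ne_of_gt hbc
  have key : (b+c) * ((oa0-h0)*(oa0-na0)+(oa1-h1)*(oa1-na1)) = (b+c) * 0 := by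
    linear_combination (-1*c*h0 + 1*c*oa0 - 1*c*na0 - 1*c*ma0 - 1*b*h0 + 1*b*oa0 - 1*b*na0 - 1*b*ma0 + 1*C0*c + 1*C0*b + 1*B0*c + 1*B0*b) * hoa0 + (-1*c*h1 + 1*c*oa1 - 1*c*na1 - 1*c*ma1 - 1*b*h1 + 1*b*oa1 - 1*b*na1 - 1*b*ma1 + 1*C1*c + 1*C1*b + 1*B1*c + 1*B1*b) * hoa1 + (1*c*na0 + 1*c*ma0 + 1*b*na0 + 1*b*ma0 - 1*C0*c - 1*C0*b - 1*B0*c - 1*B0*b) * hh0 + (1*c*na1 + 1*c*ma1 + 1*b*na1 + 1*b*ma1 - 1*C1*c - 1*C1*b - 1*B1*c - 1*B1*b) * hh1 + (-2*c*o0 + 1*c*ma0 - 2*b*o0 + 1*b*ma0 + 1*A0*c + 1*A0*b) * hnn0 + (-2*c*o1 + 1*c*ma1 - 2*b*o1 + 1*b*ma1 + 1*A1*c + 1*A1*b) * hnn1 + (4*o0 - 2*ma0 - 2*A0) * hf2 + (4*o1 - 2*ma1 - 2*A1) * hf3 + (-1*c - 1*b + 2*a) * hf1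
  exact mul_left_cancel₀ hK key

lemma keyMid (na0 na1 oa0 oa1 h0 h1 m0 m1 : ℝ)
    (hm0 : 2*m0 = h0+na0) (hm1 : 2*m1 = h1+na1)
    (horth : (oa0-h0)*(oa0-na0)+(oa1-h1)*(oa1-na1) = 0) :
    (oa0-m0)^2+(oa1-m1)^2 = ((h0-na0)^2+(h1-na1)^2)/4 := by
  linear_combination ((1/2)*m0 + (1/4)*h0 - 1*oa0 + (1/4)*na0) * hm0 + ((1/2)*m1 + (1/4)*h1 - 1*oa1 + (1/4)*na1) * hm1 + (1) * horth

/-- The Nagel point is the antipode of `H` on the Fuhrmann circle. -/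
theorem nagel_antipode_of_orthocenter
    (A B C I H Na HA HB HC Oa Ob Oc Of : EuclideanSpace ℝ (Fin 2))
    (hABC : AffineIndependent ℝ ![A, B, C])
    (a b c s : ℝ)
    (ha : a = dist B C) (hb : b = dist C A) (hc : c = dist A B)
    (hs : s = (a + b + c) / 2)
    (hI : I = (2 * s)⁻¹ • (a • A + b • B + c • C))
    (hH : H = orthocenter3 A B C hABC)
    (hNa : Na = s⁻¹ • ((s - a) • A + (s - b) • B + (s - c) • C))
    (hBIC : AffineIndependent ℝ ![B, I, C])
    (hCIA : AffineIndependent ℝ ![C, I, A])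
    (hAIB : AffineIndependent ℝ ![A, I, B])
    (hHA : HA = orthocenter3 B I C hBIC)
    (hHB : HB = orthocenter3 C I A hCIA)
    (hHC : HC = orthocenter3 A I B hAIB)
    (ha' : AffineIndependent ℝ ![HA, B, C])
    (hb' : AffineIndependent ℝ ![HB, C, A])
    (hc' : AffineIndependent ℝ ![HC, A, B])
    (hOa : Oa = circumcenter3 HA B C ha')
    (hOb : Ob = circumcenter3 HB C A hb')
    (hOc : Oc = circumcenter3 HC A B hc')
    (hF : AffineIndependent ℝ ![Oa, Ob, Oc])
    (hOf : Of = circumcenter3 Oa Ob Oc hF) :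
    Of = midpoint ℝ H Na := by
  subst hs
  -- distinctness and positivity
  have hncol : ¬Collinear ℝ ({A, B, C} : Set (EuclideanSpace ℝ (Fin 2))) :=
    affineIndependent_iff_not_collinear_set.1 hABC
  have hBC : B ≠ C := by
    rintro rfl
    exact hncol (Collinear.subset (by intro x hx; simp at hx ⊢; tauto) (collinear_pair ℝ A B))
  have hCA : C ≠ A := by
    rintro rfl
    exact hncol (Collinear.subset (by intro x hx; simp at hx ⊢; tauto) (collinear_pair ℝ C B))
  have hAB : A ≠ B := by
    rintro rfl
    exact hncol (Collinear.subset (by intro x hx; simp at hx ⊢; tauto) (collinear_pair ℝ A C))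
  have ha0 : 0 < a := ha ▸ dist_pos.2 hBC
  have hb0 : 0 < b := hb ▸ dist_pos.2 hCA
  have hc0 : 0 < c := hc ▸ dist_pos.2 hAB
  have triA : dist B C < dist B A + dist A C := by
    refine strict_tri (fun hcol => hncol (hcol.subset ?_))
    intro x hx; simp at hx ⊢; tauto
  have triB : dist C A < dist C B + dist B A := by
    refine strict_tri (fun hcol => hncol (hcol.subset ?_))
    intro x hx; simp at hx ⊢; tauto
  have triC : dist A B < dist A C + dist C B := by
    refine strict_tri (fun hcol => hncol (hcol.subset ?_))
    intro x hx; simp at hx ⊢; tauto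
  have hU : 0 < -a+b+c := by
    rw [ha, hb, hc, dist_comm C A]
    have e1 : dist B A = dist A B := dist_comm _ _
    have e2 : dist A C = dist C A := dist_comm _ _
    linarith [triA]
  have hV : 0 < a-b+c := by
    rw [ha, hb, hc]
    have e1 : dist C B = dist B C := dist_comm _ _
    have e2 : dist B A = dist A B := dist_comm _ _
    linarith [triB]
  have hW : 0 < a+b-c := by
    rw [ha, hb, hc]
    have e1 : dist A C = dist C A := dist_comm _ _
    have e2 : dist C B = dist B C := dist_comm _ _
    linarith [triC]
  have hT : 0 < a+b+c := by linarith
  have hTne : (a+b+c) ≠ 0 := ne_of_gt hT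
  have hTne' : (b+c+a) ≠ 0 := by intro h0; exact hTne (by linarith)
  have hTne'' : (c+a+b) ≠ 0 := by intro h0; exact hTne (by linarith)
  have hbc : 0 < b+c := by linarith
  have hca : 0 < c+a := by linarith
  have hab : 0 < a+b := by linarith
  -- squared side lengths
  have ha2 : a^2 = (B 0-C 0)^2+(B 1-C 1)^2 := by rw [ha]; exact dist_sq2 B C
  have hb2 : b^2 = (C 0-A 0)^2+(C 1-A 1)^2 := by rw [hb]; exact dist_sq2 C A
  have hc2 : c^2 = (A 0-B 0)^2+(A 1-B 1)^2 := by rw [hc]; exact dist_sq2 A B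
  -- incenter and Nagel coordinates
  have hi : ∀ j, (a+b+c) * I j = a * A j + b * B j + c * C j := by
    intro j; rw [hI]
    simp only [PiLp.smul_apply, PiLp.add_apply, smul_eq_mul]
    field_simp
  have hna : ∀ j, (a+b+c) * Na j = (-a+b+c) * A j + (a-b+c) * B j + (a+b-c) * C j := by
    intro j; rw [hNa]
    simp only [PiLp.smul_apply, PiLp.add_apply, smul_eq_mul]
    have hs2 : ((a+b+c)/2) ≠ 0 := by positivity
    field_simp
    ring
  have hnn : ∀ j, Na j = A j + B j + C j - 2 * I j := by
    intro j
    exact mul_left_cancel₀ hTne (by linear_combination hna j + 2 * hi j)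
  -- the arc midpoints
  have hTUne : ((a+b+c)*(-a+b+c)) ≠ 0 := ne_of_gt (mul_pos hT hU)
  have hTVne : ((b+c+a)*(-b+c+a)) ≠ 0 := by
    refine ne_of_gt (mul_pos (by linarith) (by linarith))
  have hTWne : ((c+a+b)*(-c+a+b)) ≠ 0 := by
    refine ne_of_gt (mul_pos (by linarith) (by linarith))
  set Ma : EuclideanSpace ℝ (Fin 2) :=
    ((a+b+c)*(-a+b+c))⁻¹ • ((-a^2) • A + (b*(b+c)) • B + (c*(b+c)) • C) with hMadef
  set Mb : EuclideanSpace ℝ (Fin 2) :=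
    ((b+c+a)*(-b+c+a))⁻¹ • ((-b^2) • B + (c*(c+a)) • C + (a*(c+a)) • A) with hMbdef
  set Mc : EuclideanSpace ℝ (Fin 2) :=
    ((c+a+b)*(-c+a+b))⁻¹ • ((-c^2) • C + (a*(a+b)) • A + (b*(a+b)) • B) with hMcdef
  have hma : ∀ j, (a+b+c)*(-a+b+c)*Ma j = -a^2*A j+b*(b+c)*B j+c*(b+c)*C j := by
    intro j; rw [hMadef]
    simp only [PiLp.smul_apply, PiLp.add_apply, smul_eq_mul]
    field_simp
  have hmb : ∀ j, (b+c+a)*(-b+c+a)*Mb j = -b^2*B j+c*(c+a)*C j+a*(c+a)*A j := by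
    intro j; rw [hMbdef]
    simp only [PiLp.smul_apply, PiLp.add_apply, smul_eq_mul]
    have hne : (-b+c+a) ≠ 0 := ne_of_gt (by linarith)
    field_simp
  have hmc : ∀ j, (c+a+b)*(-c+a+b)*Mc j = -c^2*C j+a*(a+b)*A j+b*(a+b)*B j := by
    intro j; rw [hMcdef]
    simp only [PiLp.smul_apply, PiLp.add_apply, smul_eq_mul]
    have hne : (-c+a+b) ≠ 0 := ne_of_gt (by linarith)
    field_simp
  -- Ma is the circumcenter of BIC (incenter-excenter lemma)
  have k1a : (Ma 0-B 0)^2+(Ma 1-B 1)^2 = (Ma 0-C 0)^2+(Ma 1-C 1)^2 :=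
    key1 (A 0) (A 1) (B 0) (B 1) (C 0) (C 1) a b c (Ma 0) (Ma 1)
      ha2 hb2 hc2 (hma 0) (hma 1) hT hU
  have k2a : (Ma 0-B 0)^2+(Ma 1-B 1)^2 = (Ma 0-I 0)^2+(Ma 1-I 1)^2 :=
    key2 (A 0) (A 1) (B 0) (B 1) (C 0) (C 1) a b c (Ma 0) (Ma 1) (I 0) (I 1)
      ha2 hb2 hc2 (hma 0) (hma 1) (hi 0) (hi 1) hT hU
  have k1b : (Mb 0-C 0)^2+(Mb 1-C 1)^2 = (Mb 0-A 0)^2+(Mb 1-A 1)^2 :=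
    key1 (B 0) (B 1) (C 0) (C 1) (A 0) (A 1) b c a (Mb 0) (Mb 1)
      hb2 hc2 ha2 (hmb 0) (hmb 1) (by linarith) (by linarith)
  have k2b : (Mb 0-C 0)^2+(Mb 1-C 1)^2 = (Mb 0-I 0)^2+(Mb 1-I 1)^2 :=
    key2 (B 0) (B 1) (C 0) (C 1) (A 0) (A 1) b c a (Mb 0) (Mb 1) (I 0) (I 1)
      hb2 hc2 ha2 (hmb 0) (hmb 1) (by linear_combination hi 0) (by linear_combination hi 1)
      (by linarith) (by linarith)
  have k1c : (Mc 0-A 0)^2+(Mc 1-A 1)^2 = (Mc 0-B 0)^2+(Mc 1-B 1)^2 :=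
    key1 (C 0) (C 1) (A 0) (A 1) (B 0) (B 1) c a b (Mc 0) (Mc 1)
      hc2 ha2 hb2 (hmc 0) (hmc 1) (by linarith) (by linarith)
  have k2c : (Mc 0-A 0)^2+(Mc 1-A 1)^2 = (Mc 0-I 0)^2+(Mc 1-I 1)^2 :=
    key2 (C 0) (C 1) (A 0) (A 1) (B 0) (B 1) c a b (Mc 0) (Mc 1) (I 0) (I 1)
      hc2 ha2 hb2 (hmc 0) (hmc 1) (by linear_combination hi 0) (by linear_combination hi 1)
      (by linarith) (by linarith)
  have cMa : Ma = circumcenter3 B I C hBIC :=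
    eq_circumcenter3 hBIC (by linear_combination k2a) (by linear_combination k1a)
  have cMb : Mb = circumcenter3 C I A hCIA :=
    eq_circumcenter3 hCIA (by linear_combination k2b) (by linear_combination k1b)
  have cMc : Mc = circumcenter3 A I B hAIB :=
    eq_circumcenter3 hAIB (by linear_combination k2c) (by linear_combination k1c)
  -- orthocenters of BIC etc.
  have hHAc : ∀ j, HA j = B j + I j + C j - 2 * Ma j := by
    intro j; rw [hHA, orthocenter3_coord B I C hBIC j, ← cMa]
  have hHBc : ∀ j, HB j = C j + I j + A j - 2 * Mb j := by
    intro j; rw [hHB, orthocenter3_coord C I A hCIA j, ← cMb]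
  have hHCc : ∀ j, HC j = A j + I j + B j - 2 * Mc j := by
    intro j; rw [hHC, orthocenter3_coord A I B hAIB j, ← cMc]
  -- the Fuhrmann vertices: Oa = B + C - Ma etc.
  have hEa : (B + C - Ma : EuclideanSpace ℝ (Fin 2)) = circumcenter3 HA B C ha' := by
    refine eq_circumcenter3 ha' ?_ ?_
    · simp only [PiLp.add_apply, PiLp.sub_apply]
      linear_combination (HA 0 - B 0 - C 0 + I 0) * hHAc 0 + (HA 1 - B 1 - C 1 + I 1) * hHAc 1
        - k2a + k1a
    · simp only [PiLp.add_apply, PiLp.sub_apply]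
      linear_combination (HA 0 - B 0 - C 0 + I 0) * hHAc 0 + (HA 1 - B 1 - C 1 + I 1) * hHAc 1
        - k2a
  have hEb : (C + A - Mb : EuclideanSpace ℝ (Fin 2)) = circumcenter3 HB C A hb' := by
    refine eq_circumcenter3 hb' ?_ ?_
    · simp only [PiLp.add_apply, PiLp.sub_apply]
      linear_combination (HB 0 - C 0 - A 0 + I 0) * hHBc 0 + (HB 1 - C 1 - A 1 + I 1) * hHBc 1
        - k2b + k1b
    · simp only [PiLp.add_apply, PiLp.sub_apply]
      linear_combination (HB 0 - C 0 - A 0 + I 0) * hHBc 0 + (HB 1 - C 1 - A 1 + I 1) * hHBc 1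
        - k2b
  have hEc : (A + B - Mc : EuclideanSpace ℝ (Fin 2)) = circumcenter3 HC A B hc' := by
    refine eq_circumcenter3 hc' ?_ ?_
    · simp only [PiLp.add_apply, PiLp.sub_apply]
      linear_combination (HC 0 - A 0 - B 0 + I 0) * hHCc 0 + (HC 1 - A 1 - B 1 + I 1) * hHCc 1
        - k2c + k1c
    · simp only [PiLp.add_apply, PiLp.sub_apply]
      linear_combination (HC 0 - A 0 - B 0 + I 0) * hHCc 0 + (HC 1 - A 1 - B 1 + I 1) * hHCc 1
        - k2c
  have hoa : ∀ j, Oa j = B j + C j - Ma j := by intro j; rw [hOa, ← hEa]; rfl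
  have hob : ∀ j, Ob j = C j + A j - Mb j := by intro j; rw [hOb, ← hEb]; rfl
  have hoc : ∀ j, Oc j = A j + B j - Mc j := by intro j; rw [hOc, ← hEc]; rfl
  -- circumcenter of ABC
  set O : EuclideanSpace ℝ (Fin 2) := circumcenter3 A B C hABC with hOdef
  have hO1 : (O 0-A 0)^2+(O 1-A 1)^2 = (O 0-B 0)^2+(O 1-B 1)^2 := by
    rw [← dist_sq2, ← dist_sq2, hOdef, (circumcenter3_dist_eq hABC).1]
  have hO2 : (O 0-A 0)^2+(O 1-A 1)^2 = (O 0-C 0)^2+(O 1-C 1)^2 := by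
    rw [← dist_sq2, ← dist_sq2, hOdef, (circumcenter3_dist_eq hABC).2]
  have hHc : ∀ j, H j = A j + B j + C j - 2 * O j := by
    intro j; rw [hH, orthocenter3_coord A B C hABC j]
  -- arc midpoints lie on the circumcircle
  have f1a : (O 0-Ma 0)^2+(O 1-Ma 1)^2 = (O 0-A 0)^2+(O 1-A 1)^2 :=
    keyf1 (A 0) (A 1) (B 0) (B 1) (C 0) (C 1) a b c (Ma 0) (Ma 1) (O 0) (O 1)
      ha2 hb2 hc2 (hma 0) (hma 1) hO1 hO2 hT hU
  have f1b : (O 0-Mb 0)^2+(O 1-Mb 1)^2 = (O 0-B 0)^2+(O 1-B 1)^2 :=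
    keyf1 (B 0) (B 1) (C 0) (C 1) (A 0) (A 1) b c a (Mb 0) (Mb 1) (O 0) (O 1)
      hb2 hc2 ha2 (hmb 0) (hmb 1) (by linear_combination hO2 - hO1) (by linear_combination -hO1)
      (by linarith) (by linarith)
  have f1c : (O 0-Mc 0)^2+(O 1-Mc 1)^2 = (O 0-C 0)^2+(O 1-C 1)^2 :=
    keyf1 (C 0) (C 1) (A 0) (A 1) (B 0) (B 1) c a b (Mc 0) (Mc 1) (O 0) (O 1)
      hc2 ha2 hb2 (hmc 0) (hmc 1) (by linear_combination -hO2) (by linear_combination hO1 - hO2)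
      (by linarith) (by linarith)
  -- collinearity of A, I, Ma etc.
  have hf2 : ∀ j, (b+c)*(I j-A j) = (-a+b+c)*(Ma j-A j) := by
    intro j
    exact mul_left_cancel₀ hTne (by linear_combination (b+c) * hi j - hma j)
  have hg2 : ∀ j, (c+a)*(I j-B j) = (-b+c+a)*(Mb j-B j) := by
    intro j
    exact mul_left_cancel₀ hTne' (by linear_combination (c+a) * hi j - hmb j)
  have hh2 : ∀ j, (a+b)*(I j-C j) = (-c+a+b)*(Mc j-C j) := by
    intro j
    exact mul_left_cancel₀ hTne'' (by linear_combination (a+b) * hi j - hmc j)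
  -- orthogonality: Oa, Ob, Oc lie on the circle with diameter H Na
  have orthA : (Oa 0-H 0)*(Oa 0-Na 0)+(Oa 1-H 1)*(Oa 1-Na 1) = 0 :=
    keyOrth (A 0) (A 1) (B 0) (B 1) (C 0) (C 1) a b c (Ma 0) (Ma 1) (I 0) (I 1)
      (Na 0) (Na 1) (O 0) (O 1) (Oa 0) (Oa 1) (H 0) (H 1)
      f1a (hf2 0) (hf2 1) (hnn 0) (hnn 1) (hoa 0) (hoa 1) (hHc 0) (hHc 1) hbc
  have orthB : (Ob 0-H 0)*(Ob 0-Na 0)+(Ob 1-H 1)*(Ob 1-Na 1) = 0 :=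
    keyOrth (B 0) (B 1) (C 0) (C 1) (A 0) (A 1) b c a (Mb 0) (Mb 1) (I 0) (I 1)
      (Na 0) (Na 1) (O 0) (O 1) (Ob 0) (Ob 1) (H 0) (H 1)
      f1b (hg2 0) (hg2 1) (by linear_combination hnn 0) (by linear_combination hnn 1)
      (hob 0) (hob 1) (by linear_combination hHc 0) (by linear_combination hHc 1) hca
  have orthC : (Oc 0-H 0)*(Oc 0-Na 0)+(Oc 1-H 1)*(Oc 1-Na 1) = 0 :=
    keyOrth (C 0) (C 1) (A 0) (A 1) (B 0) (B 1) c a b (Mc 0) (Mc 1) (I 0) (I 1)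
      (Na 0) (Na 1) (O 0) (O 1) (Oc 0) (Oc 1) (H 0) (H 1)
      f1c (hh2 0) (hh2 1) (by linear_combination hnn 0) (by linear_combination hnn 1)
      (hoc 0) (hoc 1) (by linear_combination hHc 0) (by linear_combination hHc 1) hab
  -- the midpoint of H and Na is equidistant from Oa, Ob, Oc
  have hm : ∀ j, 2 * (midpoint ℝ H Na) j = H j + Na j := by
    intro j; rw [midpoint_eq_smul_add]
    simp only [PiLp.smul_apply, PiLp.add_apply, smul_eq_mul]
    norm_num
    ring
  have dA := keyMid (Na 0) (Na 1) (Oa 0) (Oa 1) (H 0) (H 1)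
    ((midpoint ℝ H Na) 0) ((midpoint ℝ H Na) 1) (hm 0) (hm 1) orthA
  have dB := keyMid (Na 0) (Na 1) (Ob 0) (Ob 1) (H 0) (H 1)
    ((midpoint ℝ H Na) 0) ((midpoint ℝ H Na) 1) (hm 0) (hm 1) orthB
  have dC := keyMid (Na 0) (Na 1) (Oc 0) (Oc 1) (H 0) (H 1)
    ((midpoint ℝ H Na) 0) ((midpoint ℝ H Na) 1) (hm 0) (hm 1) orthC
  rw [hOf]
  exact (eq_circumcenter3 hF (dA.trans dB.symm) (dA.trans dC.symm)).symm
end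

section
/- Let A, B, C be an affinely independent triple in the Euclidean plane with incenter I = (a·A + b·B + c·C)/(2s) (where a = dist B C, b = dist C A, c = dist A B, s = (a+b+c)/2). Let H_A, H_B, H_C be the orthocenters of triangles BIC, CIA, AIB, let O_a, O_b, O_c be the circumcenters of triangles H_A B C, H_B C A, H_C A B respectively (each triple assumed affinely independent), and assume O_a, O_b, O_c are affinely independent. Then the orthocenter of the Fuhrmann triangle O_a O_b O_c is I. -/
open EuclideanGeometry
open scoped InnerProductSpace

private abbrev Pt := EuclideanSpace ℝ (Fin 2)

private lemma normsq3 (P Q R : Pt) (x y z : ℝ) (h : x + y + z = 0) :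
    ‖x • P + y • Q + z • R‖^2
      = -(x*y*‖P-Q‖^2 + y*z*‖Q-R‖^2 + z*x*‖R-P‖^2) := by
  have hz : z = -x - y := by linarith
  subst hz
  rw [show x • P + y • Q + (-x-y) • R = x • (P-R) + y • (Q-R) by module,
    show P - Q = (P-R) - (Q-R) by abel, show R - P = -((P-R) - 0) by abel]
  rw [norm_neg, sub_zero, norm_add_sq_real, norm_sub_sq_real, norm_smul, norm_smul,
    real_inner_smul_left, real_inner_smul_right, Real.norm_eq_abs, Real.norm_eq_abs,
    mul_pow, mul_pow, sq_abs, sq_abs]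
  ring

private lemma dist_eq_of_combo {X Y Z W P Q R : Pt} {T x1 y1 z1 x2 y2 z2 : ℝ}
    (hT : 0 < T)
    (k1 : T • (X - Y) = x1 • P + y1 • Q + z1 • R)
    (k2 : T • (Z - W) = x2 • P + y2 • Q + z2 • R)
    (h1 : x1 + y1 + z1 = 0) (h2 : x2 + y2 + z2 = 0)
    (hval : x1*y1*‖P-Q‖^2 + y1*z1*‖Q-R‖^2 + z1*x1*‖R-P‖^2
          = x2*y2*‖P-Q‖^2 + y2*z2*‖Q-R‖^2 + z2*x2*‖R-P‖^2) :
    dist X Y = dist Z W := by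
  have e : ‖T • (X - Y)‖^2 = ‖T • (Z - W)‖^2 := by
    rw [k1, k2, normsq3 _ _ _ _ _ _ h1, normsq3 _ _ _ _ _ _ h2, hval]
  have e' : ‖T • (X - Y)‖ = ‖T • (Z - W)‖ := by
    rw [← Real.sqrt_sq (norm_nonneg (T • (X - Y))),
      ← Real.sqrt_sq (norm_nonneg (T • (Z - W))), e]
  rw [norm_smul, norm_smul, Real.norm_eq_abs, abs_of_pos hT] at e'
  rw [dist_eq_norm, dist_eq_norm]
  exact mul_left_cancel₀ (ne_of_gt hT) e'

private lemma tri_facts (P Q R X : Pt) (h : AffineIndependent ℝ ![P, Q, R])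
    (h1 : dist X P = dist X Q) (h2 : dist X P = dist X R) :
    circumcenter3 P Q R h = X ∧
      orthocenter3 P Q R h = P + Q + R - (2:ℝ) • X := by
  set t : Affine.Triangle ℝ Pt := ⟨![P, Q, R], h⟩ with ht
  have hspan : affineSpan ℝ (Set.range t.points) = ⊤ :=
    t.independent.affineSpan_eq_top_iff_card_eq_finrank_add_one.mpr (by simp)
  have hcc : t.circumcenter = X := by
    refine (Affine.Simplex.eq_circumcenter_of_dist_eq t ?_ (r := dist X P) ?_).symm
    · rw [hspan]; exact AffineSubspace.mem_top _ _ _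
    · intro i
      fin_cases i <;>
        · simp only [ht, Matrix.cons_val_zero, Matrix.cons_val_one, Matrix.head_cons,
            Matrix.cons_val_two, Matrix.tail_cons]
          rw [dist_comm]
          first
          | rfl
          | exact h1.symm
          | exact h2.symm
  have hcent : (Finset.univ : Finset (Fin 3)).centroid ℝ t.points
      = (3:ℝ)⁻¹ • (P + Q + R) := by
    rw [Finset.centroid_def,
      Finset.affineCombination_eq_linear_combination _ _ _
        (Finset.sum_centroidWeights_eq_one_of_nonempty ℝ _ Finset.univ_nonempty),
      Fin.sum_univ_three]
    simp only [ht, Finset.centroidWeights_apply, Matrix.cons_val_zero, Matrix.cons_val_one,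
      Matrix.head_cons, Matrix.cons_val_two, Matrix.tail_cons, Finset.card_univ,
      Fintype.card_fin, Nat.cast_ofNat]
    module
  refine ⟨hcc, ?_⟩
  show t.orthocenter = _
  rw [Affine.Triangle.orthocenter_eq_mongePoint,
    Affine.Simplex.mongePoint_eq_smul_vsub_vadd_circumcenter, hcc, hcent]
  simp only [vsub_eq_sub, vadd_eq_add]
  norm_num
  module

private lemma vertexM (P Q R J M : Pt) (p q r : ℝ)
    (hp : 0 < p) (hq : 0 < q) (hr : 0 < r) (htri : p < q + r)
    (hQR : ‖Q - R‖^2 = p^2) (hRP : ‖R - P‖^2 = q^2) (hPQ : ‖P - Q‖^2 = r^2)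
    (hJ : (p+q+r) • J = p • P + q • Q + r • R)
    (hM : ((q+r)^2 - p^2) • M = (-(p^2)) • P + (q*(q+r)) • Q + (r*(q+r)) • R) :
    dist M Q = dist M J ∧ dist M Q = dist M R := by
  have hD : 0 < (q+r)^2 - p^2 := by nlinarith
  have hT : 0 < ((q+r)^2 - p^2) * (p+q+r) := mul_pos hD (by linarith)
  have kMQ : (((q+r)^2 - p^2) * (p+q+r)) • (M - Q) = (-(p^3) - p^2*q - p^2*r) • P + (p^3 + p^2*q + p^2*r - p*q*r - p*r^2 - q^2*r - 2*q*r^2 - r^3) • Q + (p*q*r + p*r^2 + q^2*r + 2*q*r^2 + r^3) • R := by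
    have e : (((q+r)^2 - p^2) * (p+q+r)) • (M - Q)
        = (p+q+r) • (((q+r)^2 - p^2) • M) - (((q+r)^2 - p^2) * (p+q+r)) • Q := by module
    rw [hM] at e
    exact e.trans (by module)
  have kMJ : (((q+r)^2 - p^2) * (p+q+r)) • (M - J) = (-(p^2*q) - p^2*r - p*q^2 - 2*p*q*r - p*r^2) • P + (p^2*q + p*q^2 + p*q*r) • Q + (p^2*r + p*q*r + p*r^2) • R := by
    have e : (((q+r)^2 - p^2) * (p+q+r)) • (M - J)
        = (p+q+r) • (((q+r)^2 - p^2) • M) - ((q+r)^2 - p^2) • ((p+q+r) • J) := by module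
    rw [hM, hJ] at e
    exact e.trans (by module)
  have kMR : (((q+r)^2 - p^2) * (p+q+r)) • (M - R) = (-(p^3) - p^2*q - p^2*r) • P + (p*q^2 + p*q*r + q^3 + 2*q^2*r + q*r^2) • Q + (p^3 + p^2*q + p^2*r - p*q^2 - p*q*r - q^3 - 2*q^2*r - q*r^2) • R := by
    have e : (((q+r)^2 - p^2) * (p+q+r)) • (M - R)
        = (p+q+r) • (((q+r)^2 - p^2) • M) - (((q+r)^2 - p^2) * (p+q+r)) • R := by module
    rw [hM] at e
    exact e.trans (by module)
  exact ⟨dist_eq_of_combo hT kMQ kMJ (by ring) (by ring)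
      (by rw [hQR, hRP, hPQ]; ring),
    dist_eq_of_combo hT kMQ kMR (by ring) (by ring)
      (by rw [hQR, hRP, hPQ]; ring)⟩

private lemma vertexX (P Q R J M X H : Pt) (p q r : ℝ)
    (hp : 0 < p) (hq : 0 < q) (hr : 0 < r) (htri : p < q + r)
    (hQR : ‖Q - R‖^2 = p^2) (hRP : ‖R - P‖^2 = q^2) (hPQ : ‖P - Q‖^2 = r^2)
    (hJ : (p+q+r) • J = p • P + q • Q + r • R)
    (hM : ((q+r)^2 - p^2) • M = (-(p^2)) • P + (q*(q+r)) • Q + (r*(q+r)) • R)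
    (hX : ((q+r)^2 - p^2) • X = (p^2) • P + (r*(q+r)-p^2) • Q + (q*(q+r)-p^2) • R)
    (hH : H = Q + J + R - (2:ℝ) • M) :
    dist X H = dist X Q ∧ dist X Q = dist X R := by
  subst hH
  have hD : 0 < (q+r)^2 - p^2 := by nlinarith
  have hT : 0 < ((q+r)^2 - p^2) * (p+q+r) := mul_pos hD (by linarith)
  have kXH : (((q+r)^2 - p^2) * (p+q+r)) • (X - (Q + J + R - (2:ℝ) • M))
      = (-(p^2*q) - p^2*r - p*q^2 - 2*p*q*r - p*r^2) • P + (p^2*q + p*q^2 + p*q*r) • Q + (p^2*r + p*q*r + p*r^2) • R := by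
    have e : (((q+r)^2 - p^2) * (p+q+r)) • (X - (Q + J + R - (2:ℝ) • M))
        = (p+q+r) • (((q+r)^2 - p^2) • X)
          - (((q+r)^2 - p^2) * (p+q+r)) • Q - (((q+r)^2 - p^2) * (p+q+r)) • R
          - ((q+r)^2 - p^2) • ((p+q+r) • J)
          + (2*(p+q+r)) • (((q+r)^2 - p^2) • M) := by module
    rw [hM, hJ, hX] at e
    exact e.trans (by module)
  have kXQ : (((q+r)^2 - p^2) * (p+q+r)) • (X - Q) = (-(-(p^3) - p^2*q - p^2*r)) • P + (-(p*q^2 + p*q*r + q^3 + 2*q^2*r + q*r^2)) • Q + (-(p^3 + p^2*q + p^2*r - p*q^2 - p*q*r - q^3 - 2*q^2*r - q*r^2)) • R := by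
    have e : (((q+r)^2 - p^2) * (p+q+r)) • (X - Q)
        = (p+q+r) • (((q+r)^2 - p^2) • X) - (((q+r)^2 - p^2) * (p+q+r)) • Q := by module
    rw [hX] at e
    exact e.trans (by module)
  have kXR : (((q+r)^2 - p^2) * (p+q+r)) • (X - R) = (-(-(p^3) - p^2*q - p^2*r)) • P + (-(p^3 + p^2*q + p^2*r - p*q*r - p*r^2 - q^2*r - 2*q*r^2 - r^3)) • Q + (-(p*q*r + p*r^2 + q^2*r + 2*q*r^2 + r^3)) • R := by
    have e : (((q+r)^2 - p^2) * (p+q+r)) • (X - R)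
        = (p+q+r) • (((q+r)^2 - p^2) • X) - (((q+r)^2 - p^2) * (p+q+r)) • R := by module
    rw [hX] at e
    exact e.trans (by module)
  exact ⟨dist_eq_of_combo hT kXH kXQ (by ring) (by ring)
      (by rw [hQR, hRP, hPQ]; ring),
    dist_eq_of_combo hT kXQ kXR (by ring) (by ring)
      (by rw [hQR, hRP, hPQ]; ring)⟩

set_option maxHeartbeats 2000000 in
/-- The orthocenter of the Fuhrmann triangle is the incenter `I`. -/
theorem fuhrmann_orthocenter (A B C I HA HB HC Oa Ob Oc : EuclideanSpace ℝ (Fin 2))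
    (hABC : AffineIndependent ℝ ![A, B, C])
    (a b c s : ℝ)
    (ha : a = dist B C) (hb : b = dist C A) (hc : c = dist A B)
    (hs : s = (a + b + c) / 2)
    (hI : I = (2 * s)⁻¹ • (a • A + b • B + c • C))
    (hBIC : AffineIndependent ℝ ![B, I, C])
    (hCIA : AffineIndependent ℝ ![C, I, A])
    (hAIB : AffineIndependent ℝ ![A, I, B])
    (hHA : HA = orthocenter3 B I C hBIC)
    (hHB : HB = orthocenter3 C I A hCIA)
    (hHC : HC = orthocenter3 A I B hAIB)
    (ha' : AffineIndependent ℝ ![HA, B, C])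
    (hb' : AffineIndependent ℝ ![HB, C, A])
    (hc' : AffineIndependent ℝ ![HC, A, B])
    (hOa : Oa = circumcenter3 HA B C ha')
    (hOb : Ob = circumcenter3 HB C A hb')
    (hOc : Oc = circumcenter3 HC A B hc')
    (hF : AffineIndependent ℝ ![Oa, Ob, Oc]) :
    orthocenter3 Oa Ob Oc hF = I := by
  have hInj := hABC.injective
  have hnotcol := affineIndependent_iff_not_collinear.mp hABC
  have hBC : B ≠ C := by
    intro h; exact absurd (hInj (a₁ := 1) (a₂ := 2) (by simp [h])) (by decide)
  have hCA : C ≠ A := by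
    intro h; exact absurd (hInj (a₁ := 2) (a₂ := 0) (by simp [h])) (by decide)
  have hAB : A ≠ B := by
    intro h; exact absurd (hInj (a₁ := 0) (a₂ := 1) (by simp [h])) (by decide)
  have ha0 : 0 < a := ha ▸ dist_pos.mpr hBC
  have hb0 : 0 < b := hb ▸ dist_pos.mpr hCA
  have hc0 : 0 < c := hc ▸ dist_pos.mpr hAB
  have hQR2 : ‖B - C‖^2 = a^2 := by rw [ha, dist_eq_norm]
  have hRP2 : ‖C - A‖^2 = b^2 := by rw [hb, dist_eq_norm]
  have hPQ2 : ‖A - B‖^2 = c^2 := by rw [hc, dist_eq_norm]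
  have htriA : a < b + c := by
    rcases lt_or_eq_of_le (show a ≤ b + c by
      rw [ha, hb, hc]
      calc dist B C ≤ dist B A + dist A C := dist_triangle B A C
        _ = dist C A + dist A B := by rw [dist_comm B A, dist_comm A C]; ring) with h | h
    · exact h
    · exfalso
      have heq : dist B A + dist A C = dist B C := by
        rw [dist_comm B A, ← hc, dist_comm A C, ← hb, ← ha]; linarith
      have hw : Wbtw ℝ B A C := dist_add_dist_eq_iff.mp heq
      refine hnotcol (hw.collinear.subset ?_)
      rintro x ⟨i, rfl⟩
      fin_cases i <;> simp
  have htriB : b < c + a := by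
    rcases lt_or_eq_of_le (show b ≤ c + a by
      rw [ha, hb, hc]
      calc dist C A ≤ dist C B + dist B A := dist_triangle C B A
        _ = dist A B + dist B C := by rw [dist_comm C B, dist_comm B A]; ring) with h | h
    · exact h
    · exfalso
      have heq : dist C B + dist B A = dist C A := by
        rw [dist_comm C B, ← ha, dist_comm B A, ← hc, ← hb]; linarith
      have hw : Wbtw ℝ C B A := dist_add_dist_eq_iff.mp heq
      refine hnotcol (hw.collinear.subset ?_)
      rintro x ⟨i, rfl⟩
      fin_cases i <;> simp
  have htriC : c < a + b := by
    rcases lt_or_eq_of_le (show c ≤ a + b by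
      rw [ha, hb, hc]
      calc dist A B ≤ dist A C + dist C B := dist_triangle A C B
        _ = dist B C + dist C A := by rw [dist_comm A C, dist_comm C B]; ring) with h | h
    · exact h
    · exfalso
      have heq : dist A C + dist C B = dist A B := by
        rw [dist_comm A C, ← hb, dist_comm C B, ← ha, ← hc]; linarith
      have hw : Wbtw ℝ A C B := dist_add_dist_eq_iff.mp heq
      refine hnotcol (hw.collinear.subset ?_)
      rintro x ⟨i, rfl⟩
      fin_cases i <;> simp
  have hDA : 0 < (b+c)^2 - a^2 := by
    calc (0:ℝ) < (b+c-a)*(b+c+a) := mul_pos (by linarith) (by linarith)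
      _ = (b+c)^2 - a^2 := by ring
  have hDB : 0 < (c+a)^2 - b^2 := by
    calc (0:ℝ) < (c+a-b)*(c+a+b) := mul_pos (by linarith) (by linarith)
      _ = (c+a)^2 - b^2 := by ring
  have hDC : 0 < (a+b)^2 - c^2 := by
    calc (0:ℝ) < (a+b-c)*(a+b+c) := mul_pos (by linarith) (by linarith)
      _ = (a+b)^2 - c^2 := by ring
  have hS0 : (0:ℝ) < a+b+c := by linarith
  have hI' : (a+b+c) • I = a • A + b • B + c • C := by
    have h2s : (2 * s) = a+b+c := by rw [hs]; ring
    rw [hI, h2s]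
    exact smul_inv_smul₀ (ne_of_gt hS0) _
  have hI'B : (b+c+a) • I = b • B + c • C + a • A := by
    rw [show b+c+a = a+b+c by ring, hI']; module
  have hI'C : (c+a+b) • I = c • C + a • A + b • B := by
    rw [show c+a+b = a+b+c by ring, hI']; module
  set Ma : Pt := ((b+c)^2 - a^2)⁻¹ • ((-(a^2)) • A + (b*(b+c)) • B + (c*(b+c)) • C) with hMadef
  set Mb : Pt := ((c+a)^2 - b^2)⁻¹ • ((-(b^2)) • B + (c*(c+a)) • C + (a*(c+a)) • A) with hMbdef
  set Mc : Pt := ((a+b)^2 - c^2)⁻¹ • ((-(c^2)) • C + (a*(a+b)) • A + (b*(a+b)) • B) with hMcdef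
  set Pa : Pt := ((b+c)^2 - a^2)⁻¹ • ((a^2) • A + (c*(b+c) - a^2) • B + (b*(b+c) - a^2) • C) with hPadef
  set Pb : Pt := ((c+a)^2 - b^2)⁻¹ • ((b^2) • B + (a*(c+a) - b^2) • C + (c*(c+a) - b^2) • A) with hPbdef
  set Pc : Pt := ((a+b)^2 - c^2)⁻¹ • ((c^2) • C + (b*(a+b) - c^2) • A + (a*(a+b) - c^2) • B) with hPcdef
  have hWMa : ((b+c)^2 - a^2) • Ma = (-(a^2)) • A + (b*(b+c)) • B + (c*(b+c)) • C := by
    rw [hMadef]; exact smul_inv_smul₀ (ne_of_gt hDA) _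
  have hWMb : ((c+a)^2 - b^2) • Mb = (-(b^2)) • B + (c*(c+a)) • C + (a*(c+a)) • A := by
    rw [hMbdef]; exact smul_inv_smul₀ (ne_of_gt hDB) _
  have hWMc : ((a+b)^2 - c^2) • Mc = (-(c^2)) • C + (a*(a+b)) • A + (b*(a+b)) • B := by
    rw [hMcdef]; exact smul_inv_smul₀ (ne_of_gt hDC) _
  have hWPa : ((b+c)^2 - a^2) • Pa = (a^2) • A + (c*(b+c) - a^2) • B + (b*(b+c) - a^2) • C := by
    rw [hPadef]; exact smul_inv_smul₀ (ne_of_gt hDA) _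
  have hWPb : ((c+a)^2 - b^2) • Pb = (b^2) • B + (a*(c+a) - b^2) • C + (c*(c+a) - b^2) • A := by
    rw [hPbdef]; exact smul_inv_smul₀ (ne_of_gt hDB) _
  have hWPc : ((a+b)^2 - c^2) • Pc = (c^2) • C + (b*(a+b) - c^2) • A + (a*(a+b) - c^2) • B := by
    rw [hPcdef]; exact smul_inv_smul₀ (ne_of_gt hDC) _
  -- vertex A
  obtain ⟨dMa1, dMa2⟩ := vertexM A B C I Ma a b c ha0 hb0 hc0 htriA hQR2 hRP2 hPQ2 hI' hWMa
  obtain ⟨-, horthA⟩ := tri_facts B I C Ma hBIC dMa1 dMa2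
  have hHA' : HA = B + I + C - (2:ℝ) • Ma := by rw [hHA, horthA]
  obtain ⟨dXa1, dXa2⟩ := vertexX A B C I Ma Pa HA a b c ha0 hb0 hc0 htriA
    hQR2 hRP2 hPQ2 hI' hWMa hWPa hHA'
  obtain ⟨hcircA, -⟩ := tri_facts HA B C Pa ha' dXa1 (dXa1.trans dXa2)
  have hOaeq : Oa = Pa := by rw [hOa, hcircA]
  -- vertex B
  obtain ⟨dMb1, dMb2⟩ := vertexM B C A I Mb b c a hb0 hc0 ha0 htriB hRP2 hPQ2 hQR2 hI'B hWMb
  obtain ⟨-, horthB⟩ := tri_facts C I A Mb hCIA dMb1 dMb2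
  have hHB' : HB = C + I + A - (2:ℝ) • Mb := by rw [hHB, horthB]
  obtain ⟨dXb1, dXb2⟩ := vertexX B C A I Mb Pb HB b c a hb0 hc0 ha0 htriB
    hRP2 hPQ2 hQR2 hI'B hWMb hWPb hHB'
  obtain ⟨hcircB, -⟩ := tri_facts HB C A Pb hb' dXb1 (dXb1.trans dXb2)
  have hObeq : Ob = Pb := by rw [hOb, hcircB]
  -- vertex C
  obtain ⟨dMc1, dMc2⟩ := vertexM C A B I Mc c a b hc0 ha0 hb0 htriC hPQ2 hQR2 hRP2 hI'C hWMc
  obtain ⟨-, horthC⟩ := tri_facts A I B Mc hAIB dMc1 dMc2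
  have hHC' : HC = A + I + B - (2:ℝ) • Mc := by rw [hHC, horthC]
  obtain ⟨dXc1, dXc2⟩ := vertexX C A B I Mc Pc HC c a b hc0 ha0 hb0 htriC
    hPQ2 hQR2 hRP2 hI'C hWMc hWPc hHC'
  obtain ⟨hcircC, -⟩ := tri_facts HC A B Pc hc' dXc1 (dXc1.trans dXc2)
  have hOceq : Oc = Pc := by rw [hOc, hcircC]
  -- Fuhrmann circumcenter candidate
  set OF : Pt := (2:ℝ)⁻¹ • (Pa + Pb + Pc - I) with hOFdef
  have hOF : (2:ℝ) • OF = Pa + Pb + Pc - I := by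
    rw [hOFdef]; exact smul_inv_smul₀ two_ne_zero _
  have hT2 : 0 < (((b+c)^2 - a^2) * ((c+a)^2 - b^2) * ((a+b)^2 - c^2) * (a+b+c) * 2) :=
    mul_pos (mul_pos (mul_pos (mul_pos hDA hDB) hDC) hS0) two_pos
  have eC : (((b+c)^2 - a^2) * ((c+a)^2 - b^2) * ((a+b)^2 - c^2) * (a+b+c)) • (Pa + Pb + Pc - I)
      = (((c+a)^2 - b^2) * ((a+b)^2 - c^2) * (a+b+c)) • (((b+c)^2 - a^2) • Pa)
        + (((b+c)^2 - a^2) * ((a+b)^2 - c^2) * (a+b+c)) • (((c+a)^2 - b^2) • Pb)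
        + (((b+c)^2 - a^2) * ((c+a)^2 - b^2) * (a+b+c)) • (((a+b)^2 - c^2) • Pc)
        - (((b+c)^2 - a^2) * ((c+a)^2 - b^2) * ((a+b)^2 - c^2)) • ((a+b+c) • I) := by module
  have kFa : (((b+c)^2 - a^2) * ((c+a)^2 - b^2) * ((a+b)^2 - c^2) * (a+b+c) * 2) • (OF - Pa) = (-2*a^6*b - 2*a^6*c - 4*a^5*b^2 - 12*a^5*b*c - 4*a^5*c^2 + 2*a^4*b^3 - 14*a^4*b^2*c - 14*a^4*b*c^2 + 2*a^4*c^3 + 8*a^3*b^4 + 4*a^3*b^3*c - 8*a^3*b^2*c^2 + 4*a^3*b*c^3 + 8*a^3*c^4 + 2*a^2*b^5 + 6*a^2*b^4*c + 8*a^2*b^3*c^2 + 8*a^2*b^2*c^3 + 6*a^2*b*c^4 + 2*a^2*c^5 - 4*a*b^6 - 8*a*b^5*c + 4*a*b^4*c^2 + 16*a*b^3*c^3 + 4*a*b^2*c^4 - 8*a*b*c^5 - 4*a*c^6 - 2*b^7 - 6*b^6*c - 2*b^5*c^2 + 10*b^4*c^3 + 10*b^3*c^4 - 2*b^2*c^5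 - 6*b*c^6 - 2*c^7) • A + (2*a^6*b + 4*a^5*b^2 + 6*a^5*b*c - 2*a^4*b^3 + 10*a^4*b^2*c + 4*a^4*b*c^2 - 8*a^3*b^4 + 4*a^3*b^2*c^2 - 4*a^3*b*c^3 - 2*a^2*b^5 - 8*a^2*b^2*c^3 - 6*a^2*b*c^4 + 4*a*b^6 + 10*a*b^5*c + 4*a*b^4*c^2 - 8*a*b^3*c^3 - 8*a*b^2*c^4 - 2*a*b*c^5 + 2*b^7 + 6*b^6*c + 4*b^5*c^2 - 4*b^4*c^3 - 6*b^3*c^4 - 2*b^2*c^5) • B + (2*a^6*c + 6*a^5*b*c + 4*a^5*c^2 + 4*a^4*b^2*c + 10*a^4*b*c^2 - 2*a^4*c^3 - 4*a^3*b^3*c + 4*a^3*b^2*c^2 - 8*a^3*c^4 - 6*a^2*b^4*c - 8*a^2*b^3*c^2 - 2*a^2*c^5 - 2*a*b^5*c - 8*a*b^4*c^2 - 8*a*b^3*c^3 + 4*a*b^2*c^4 + 10*a*b*c^5 + 4*a*c^6 - 2*b^5*c^2 - 6*b^4*c^3 - 4*b^3*c^4 + 4*b^2*c^5 + 6*b*c^6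 + 2*c^7) • C := by
    have e : (((b+c)^2 - a^2) * ((c+a)^2 - b^2) * ((a+b)^2 - c^2) * (a+b+c) * 2) • (OF - Pa)
        = (((b+c)^2 - a^2) * ((c+a)^2 - b^2) * ((a+b)^2 - c^2) * (a+b+c)) • ((2:ℝ) • OF)
          - (2 * (((c+a)^2 - b^2) * ((a+b)^2 - c^2) * (a+b+c))) • (((b+c)^2 - a^2) • Pa) := by module
    rw [hOF, eC, hWPa, hWPb, hWPc, hI'] at e
    exact e.trans (by module)
  have kFb : (((b+c)^2 - a^2) * ((c+a)^2 - b^2) * ((a+b)^2 - c^2) * (a+b+c) * 2) • (OF - Pb) = (2*a^7 + 4*a^6*b + 6*a^6*c - 2*a^5*b^2 + 10*a^5*b*c + 4*a^5*c^2 - 8*a^4*b^3 + 4*a^4*b*c^2 - 4*a^4*c^3 - 2*a^3*b^4 - 8*a^3*b*c^3 - 6*a^3*c^4 + 4*a^2*b^5 + 10*a^2*b^4*c + 4*a^2*b^3*c^2 - 8*a^2*b^2*c^3 - 8*a^2*b*c^4 - 2*a^2*c^5 + 2*a*b^6 + 6*a*b^5*c + 4*a*b^4*c^2 - 4*a*b^3*c^3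 - 6*a*b^2*c^4 - 2*a*b*c^5) • A + (-2*a^7 - 4*a^6*b - 6*a^6*c + 2*a^5*b^2 - 8*a^5*b*c - 2*a^5*c^2 + 8*a^4*b^3 + 6*a^4*b^2*c + 4*a^4*b*c^2 + 10*a^4*c^3 + 2*a^3*b^4 + 4*a^3*b^3*c + 8*a^3*b^2*c^2 + 16*a^3*b*c^3 + 10*a^3*c^4 - 4*a^2*b^5 - 14*a^2*b^4*c - 8*a^2*b^3*c^2 + 8*a^2*b^2*c^3 + 4*a^2*b*c^4 - 2*a^2*c^5 - 2*a*b^6 - 12*a*b^5*c - 14*a*b^4*c^2 + 4*a*b^3*c^3 + 6*a*b^2*c^4 - 8*a*b*c^5 - 6*a*c^6 - 2*b^6*c - 4*b^5*c^2 + 2*b^4*c^3 + 8*b^3*c^4 + 2*b^2*c^5 - 4*b*c^6 - 2*c^7) • B + (-2*a^5*b*c - 2*a^5*c^2 - 6*a^4*b^2*c - 8*a^4*b*c^2 - 6*a^4*c^3 - 4*a^3*b^3*c - 8*a^3*b^2*c^2 - 8*a^3*b*c^3 - 4*a^3*c^4 + 4*a^2*b^4*c + 4*a^2*b^3*c^2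 + 4*a^2*b*c^4 + 4*a^2*c^5 + 6*a*b^5*c + 10*a*b^4*c^2 + 10*a*b*c^5 + 6*a*c^6 + 2*b^6*c + 4*b^5*c^2 - 2*b^4*c^3 - 8*b^3*c^4 - 2*b^2*c^5 + 4*b*c^6 + 2*c^7) • C := by
    have e : (((b+c)^2 - a^2) * ((c+a)^2 - b^2) * ((a+b)^2 - c^2) * (a+b+c) * 2) • (OF - Pb)
        = (((b+c)^2 - a^2) * ((c+a)^2 - b^2) * ((a+b)^2 - c^2) * (a+b+c)) • ((2:ℝ) • OF)
          - (2 * (((b+c)^2 - a^2) * ((a+b)^2 - c^2) * (a+b+c))) • (((c+a)^2 - b^2) • Pb) := by module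
    rw [hOF, eC, hWPa, hWPb, hWPc, hI'] at e
    exact e.trans (by module)
  have kFc : (((b+c)^2 - a^2) * ((c+a)^2 - b^2) * ((a+b)^2 - c^2) * (a+b+c) * 2) • (OF - Pc) = (2*a^7 + 6*a^6*b + 4*a^6*c + 4*a^5*b^2 + 10*a^5*b*c - 2*a^5*c^2 - 4*a^4*b^3 + 4*a^4*b^2*c - 8*a^4*c^3 - 6*a^3*b^4 - 8*a^3*b^3*c - 2*a^3*c^4 - 2*a^2*b^5 - 8*a^2*b^4*c - 8*a^2*b^3*c^2 + 4*a^2*b^2*c^3 + 10*a^2*b*c^4 + 4*a^2*c^5 - 2*a*b^5*c - 6*a*b^4*c^2 - 4*a*b^3*c^3 + 4*a*b^2*c^4 + 6*a*b*c^5 + 2*a*c^6) • A + (-2*a^5*b^2 - 2*a^5*b*c - 6*a^4*b^3 - 8*a^4*b^2*c - 6*a^4*b*c^2 - 4*a^3*b^4 - 8*a^3*b^3*c - 8*a^3*b^2*c^2 - 4*a^3*b*c^3 + 4*a^2*b^5 + 4*a^2*b^4*c + 4*a^2*b^2*c^3 + 4*a^2*b*c^4 + 6*a*b^6 + 10*a*b^5*c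 + 10*a*b^2*c^4 + 6*a*b*c^5 + 2*b^7 + 4*b^6*c - 2*b^5*c^2 - 8*b^4*c^3 - 2*b^3*c^4 + 4*b^2*c^5 + 2*b*c^6) • B + (-2*a^7 - 6*a^6*b - 4*a^6*c - 2*a^5*b^2 - 8*a^5*b*c + 2*a^5*c^2 + 10*a^4*b^3 + 4*a^4*b^2*c + 6*a^4*b*c^2 + 8*a^4*c^3 + 10*a^3*b^4 + 16*a^3*b^3*c + 8*a^3*b^2*c^2 + 4*a^3*b*c^3 + 2*a^3*c^4 - 2*a^2*b^5 + 4*a^2*b^4*c + 8*a^2*b^3*c^2 - 8*a^2*b^2*c^3 - 14*a^2*b*c^4 - 4*a^2*c^5 - 6*a*b^6 - 8*a*b^5*c + 6*a*b^4*c^2 + 4*a*b^3*c^3 - 14*a*b^2*c^4 - 12*a*b*c^5 - 2*a*c^6 - 2*b^7 - 4*b^6*c + 2*b^5*c^2 + 8*b^4*c^3 + 2*b^3*c^4 - 4*b^2*c^5 - 2*b*c^6) • C := by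
    have e : (((b+c)^2 - a^2) * ((c+a)^2 - b^2) * ((a+b)^2 - c^2) * (a+b+c) * 2) • (OF - Pc)
        = (((b+c)^2 - a^2) * ((c+a)^2 - b^2) * ((a+b)^2 - c^2) * (a+b+c)) • ((2:ℝ) • OF)
          - (2 * (((b+c)^2 - a^2) * ((c+a)^2 - b^2) * (a+b+c))) • (((a+b)^2 - c^2) • Pc) := by module
    rw [hOF, eC, hWPa, hWPb, hWPc, hI'] at e
    exact e.trans (by module)
  have dab : dist OF Pa = dist OF Pb :=
    dist_eq_of_combo hT2 kFa kFb (by ring) (by ring) (by rw [hPQ2, hQR2, hRP2]; ring)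
  have dac : dist OF Pa = dist OF Pc :=
    dist_eq_of_combo hT2 kFa kFc (by ring) (by ring) (by rw [hPQ2, hQR2, hRP2]; ring)
  have d1 : dist OF Oa = dist OF Ob := by rw [hOaeq, hObeq]; exact dab
  have d2 : dist OF Oa = dist OF Oc := by rw [hOaeq, hOceq]; exact dac
  obtain ⟨-, horthF⟩ := tri_facts Oa Ob Oc OF hF d1 d2
  rw [horthF, hOaeq, hObeq, hOceq, hOF]
  abel
end

section
/- Let A, B, C be an affinely independent triple in the Euclidean plane with incenter I = (a·A + b·B + c·C)/(2s) (where a = dist B C, b = dist C A, c = dist A B, s = (a+b+c)/2) and orthocenter H. Let H_A be the orthocenter of triangle BIC, and let O_a be the circumcenter of triangle H_A B C (assumed affinely independent). Then the vector I − A is orthogonal to the vector O_a − H, i.e., the line AI is perpendicular to the line H O_a. -/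
open EuclideanGeometry
open scoped InnerProductSpace

private lemma cancel0 {d x : ℝ} (hd : d ≠ 0) (h : d * x = 0) : x = 0 :=
  (mul_eq_zero.mp h).resolve_left hd

private lemma cancel' {d x y : ℝ} (hd : d ≠ 0) (h : d * (x - y) = 0) : x = y :=
  sub_eq_zero.mp (cancel0 hd h)

private lemma inner_coords (x y : EuclideanSpace ℝ (Fin 2)) :
    ⟪x, y⟫_ℝ = x 0 * y 0 + x 1 * y 1 := by
  simp [PiLp.inner_apply, Fin.sum_univ_two, RCLike.inner_apply, conj_trivial]
  ring

private lemma dist_sq_coords (x y : EuclideanSpace ℝ (Fin 2)) :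
    dist x y ^ 2 = (x 0 - y 0) ^ 2 + (x 1 - y 1) ^ 2 := by
  rw [EuclideanSpace.dist_eq, Real.sq_sqrt (by positivity)]
  simp [Fin.sum_univ_two, Real.dist_eq, sq_abs]

private lemma range3 (X Y Z : EuclideanSpace ℝ (Fin 2)) :
    Set.range ![X, Y, Z] = ({X, Y, Z} : Set _) := by
  ext p
  constructor
  · rintro ⟨i, rfl⟩; fin_cases i <;> simp
  · rintro (rfl | rfl | rfl)
    exacts [⟨0, rfl⟩, ⟨1, rfl⟩, ⟨2, rfl⟩]

private lemma cross_ne_zero {X Y Z : EuclideanSpace ℝ (Fin 2)}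
    (h : AffineIndependent ℝ ![X, Y, Z]) :
    (Y 0 - X 0) * (Z 1 - X 1) - (Y 1 - X 1) * (Z 0 - X 0) ≠ 0 := by
  intro hc
  apply affineIndependent_iff_not_collinear.mp h
  rw [range3]
  by_cases hY : Y = X
  · have he : ({X, Y, Z} : Set _) = {X, Z} := by rw [hY]; simp
    rw [he]
    exact collinear_pair ℝ X Z
  · rw [collinear_iff_exists_forall_eq_smul_vadd]
    refine ⟨X, Y - X, ?_⟩
    intro p hp
    have hY' : Y 0 - X 0 ≠ 0 ∨ Y 1 - X 1 ≠ 0 := by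
      by_contra hcon
      push_neg at hcon
      apply hY
      ext i
      fin_cases i
      · simpa [sub_eq_zero] using hcon.1
      · simpa [sub_eq_zero] using hcon.2
    rcases hp with rfl | rfl | rfl
    · exact ⟨0, by simp⟩
    · refine ⟨1, ?_⟩
      ext i
      fin_cases i <;>
        simp [PiLp.add_apply, PiLp.smul_apply, PiLp.sub_apply]
    · rcases hY' with h0 | h0
      · refine ⟨(p 0 - X 0) / (Y 0 - X 0), ?_⟩
        ext i
        fin_cases i <;>
          simp only [vadd_eq_add, PiLp.add_apply, PiLp.smul_apply, smul_eq_mul, PiLp.sub_apply,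
            Fin.isValue, Fin.zero_eta, Fin.mk_one] <;> field_simp
        ring
        linear_combination hc
      · refine ⟨(p 1 - X 1) / (Y 1 - X 1), ?_⟩
        ext i
        fin_cases i <;>
          simp only [vadd_eq_add, PiLp.add_apply, PiLp.smul_apply, smul_eq_mul, PiLp.sub_apply,
            Fin.isValue, Fin.zero_eta, Fin.mk_one] <;> field_simp
        linear_combination -hc
        ring

private lemma ortho_perpA (A B C : EuclideanSpace ℝ (Fin 2))
    (h : AffineIndependent ℝ ![A, B, C]) :
    ⟪orthocenter3 A B C h - A, B - C⟫_ℝ = 0 := by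
  set t : Affine.Triangle ℝ (EuclideanSpace ℝ (Fin 2)) := ⟨![A, B, C], h⟩ with ht
  have hmem := t.orthocenter_mem_altitude (i₁ := 0)
  rw [Affine.Simplex.altitude_def, AffineSubspace.mem_inf_iff] at hmem
  obtain ⟨h1, -⟩ := hmem
  rw [AffineSubspace.mem_mk', direction_affineSpan] at h1
  have hBmem : B ∈ t.points '' ({0}ᶜ : Set (Fin 3)) := ⟨1, by simp, rfl⟩
  have hCmem : C ∈ t.points '' ({0}ᶜ : Set (Fin 3)) := ⟨2, by simp, rfl⟩
  have := h1 (B - C) (vsub_mem_vectorSpan ℝ hBmem hCmem)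
  have hA : t.points 0 = A := rfl
  rw [hA] at this
  rw [real_inner_comm] at this
  exact this

private lemma ortho_perpB (A B C : EuclideanSpace ℝ (Fin 2))
    (h : AffineIndependent ℝ ![A, B, C]) :
    ⟪orthocenter3 A B C h - B, C - A⟫_ℝ = 0 := by
  set t : Affine.Triangle ℝ (EuclideanSpace ℝ (Fin 2)) := ⟨![A, B, C], h⟩ with ht
  have hmem := t.orthocenter_mem_altitude (i₁ := 1)
  rw [Affine.Simplex.altitude_def, AffineSubspace.mem_inf_iff] at hmem
  obtain ⟨h1, -⟩ := hmem
  rw [AffineSubspace.mem_mk', direction_affineSpan] at h1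
  have hCmem : C ∈ t.points '' ({1}ᶜ : Set (Fin 3)) := ⟨2, by simp, rfl⟩
  have hAmem : A ∈ t.points '' ({1}ᶜ : Set (Fin 3)) := ⟨0, by simp, rfl⟩
  have := h1 (C - A) (vsub_mem_vectorSpan ℝ hCmem hAmem)
  have hB : t.points 1 = B := rfl
  rw [hB] at this
  rw [real_inner_comm] at this
  exact this

private lemma circum_eq (A B C : EuclideanSpace ℝ (Fin 2))
    (h : AffineIndependent ℝ ![A, B, C]) :
    dist A (circumcenter3 A B C h) = dist B (circumcenter3 A B C h) ∧
    dist A (circumcenter3 A B C h) = dist C (circumcenter3 A B C h) := by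
  set t : Affine.Triangle ℝ (EuclideanSpace ℝ (Fin 2)) := ⟨![A, B, C], h⟩ with ht
  have h0 := t.dist_circumcenter_eq_circumradius 0
  have h1 := t.dist_circumcenter_eq_circumradius 1
  have h2 := t.dist_circumcenter_eq_circumradius 2
  have e0 : t.points 0 = A := rfl
  have e1 : t.points 1 = B := rfl
  have e2 : t.points 2 = C := rfl
  rw [e0] at h0; rw [e1] at h1; rw [e2] at h2
  constructor
  · rw [show circumcenter3 A B C h = t.circumcenter from rfl, h0, h1]
  · rw [show circumcenter3 A B C h = t.circumcenter from rfl, h0, h2]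


set_option maxHeartbeats 1000000 in
private lemma main_alg (b1 b2 c1 c2 i1 i2 o1 o2 nn1 nn2 hh1 hh2 p1 p2 q1 q2 a b c : ℝ)
    (he1 : hh1 * (b1 - c1) + hh2 * (b2 - c2) = 0)
    (he2 : (hh1 - b1) * c1 + (hh2 - b2) * c2 = 0)
    (he3 : (p1 - b1) * (i1 - c1) + (p2 - b2) * (i2 - c2) = 0)
    (he4 : (p1 - i1) * (b1 - c1) + (p2 - i2) * (b2 - c2) = 0)
    (hf1 : o1 ^ 2 + o2 ^ 2 = (o1 - b1) ^ 2 + (o2 - b2) ^ 2)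
    (hf2 : o1 ^ 2 + o2 ^ 2 = (o1 - c1) ^ 2 + (o2 - c2) ^ 2)
    (hn1 : (nn1 - b1) ^ 2 + (nn2 - b2) ^ 2 = (nn1 - c1) ^ 2 + (nn2 - c2) ^ 2)
    (hn2 : (nn1 - b1) ^ 2 + (nn2 - b2) ^ 2 = (nn1 - i1) ^ 2 + (nn2 - i2) ^ 2)
    (he5 : (q1 - p1) ^ 2 + (q2 - p2) ^ 2 = (q1 - b1) ^ 2 + (q2 - b2) ^ 2)
    (he6 : (q1 - p1) ^ 2 + (q2 - p2) ^ 2 = (q1 - c1) ^ 2 + (q2 - c2) ^ 2)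
    (hra : a ^ 2 = (b1 - c1) ^ 2 + (b2 - c2) ^ 2)
    (hrb : b ^ 2 = c1 ^ 2 + c2 ^ 2)
    (hrc : c ^ 2 = b1 ^ 2 + b2 ^ 2)
    (hrI1 : (a + b + c) * i1 = b * b1 + c * c1)
    (hrI2 : (a + b + c) * i2 = b * b2 + c * c2)
    (hk : a + b + c ≠ 0)
    (hdO : b1 * c2 - b2 * c1 ≠ 0)
    (hdN : (i1 - b1) * (c2 - b2) - (i2 - b2) * (c1 - b1) ≠ 0)
    (hd : (b1 - p1) * (c2 - p2) - (b2 - p2) * (c1 - p1) ≠ 0) :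
    i1 * (q1 - hh1) + i2 * (q2 - hh2) = 0 := by
  have hH1 : hh1 = b1 + c1 - 2 * o1 :=
    cancel' hdO (by linear_combination (c2)*he1 + (c2)*hf1 + (-b2)*hf2 + (c2 - b2)*he2)
  have hH2 : hh2 = b2 + c2 - 2 * o2 :=
    cancel' hdO (by linear_combination (-c1)*he1 + (-c1)*hf1 + (b1)*hf2 + (-c1 + b1)*he2)
  have hPx1 : p1 = b1 + i1 + c1 - 2 * nn1 :=
    cancel' hdN (by linear_combination (c2 - b2)*he3 + (c2 - b2)*hn2 + (-i2 + b2)*hn1 + (i2 - c2)*he4)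
  have hPx2 : p2 = b2 + i2 + c2 - 2 * nn2 :=
    cancel' hdN (by linear_combination (-c1 + b1)*he3 + (-c1 + b1)*hn2 + (i1 - b1)*hn1 + (-i1 + c1)*he4)
  have hQ1 : q1 = b1 + c1 - nn1 := by
    refine cancel' (mul_ne_zero two_ne_zero hd) ?_
    linear_combination (p2 - c2)*hn1 + (c2 - b2)*hn2 + (-p2 + c2)*he5 + (p2 - b2)*he6 + (-c2*p1 - c2*i1 + c1*c2 + b2*p1 + b2*i1 - b2*c1 + b1*c2 - b1*b2)*hPx1 + (-c2*p2 - c2*i2 + c2^2 + b2*p2 + b2*i2 - b2^2)*hPx2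
  have hQ2 : q2 = b2 + c2 - nn2 := by
    refine cancel' (mul_ne_zero two_ne_zero hd) ?_
    linear_combination (-p1 + c1)*hn1 + (-c1 + b1)*hn2 + (p1 - c1)*he5 + (-p1 + b1)*he6 + (c1*p1 + c1*i1 - c1^2 - b1*p1 - b1*i1 + b1^2)*hPx1 + (c1*p2 + c1*i2 - c1*c2 - b2*c1 - b1*p2 - b1*i2 + b1*c2 + b1*b2)*hPx2
  have hn2x : (a+b+c)^2*((nn1-b1)^2+(nn2-b2)^2) =
      ((a+b+c)*nn1-(b*b1+c*c1))^2 + ((a+b+c)*nn2-(b*b2+c*c2))^2 := by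
    linear_combination (c^2 + 2*b*c + b^2 + 2*a*c + 2*a*b + a^2)*hn2 + (-2*c*nn1 + c*i1 - 2*b*nn1 + b*i1 - 2*a*nn1 + a*i1 + c1*c + b1*b)*hrI1 + (-2*c*nn2 + c*i2 - 2*b*nn2 + b*i2 - 2*a*nn2 + a*i2 + c2*c + b2*b)*hrI2
  have hDD : (-b2*c1*a*c - b2*c1*a*b - b2*c1*a^2 + b1*c2*a*c + b1*c2*a*b + b1*c2*a^2) =
      (a+b+c)^2*((c1-b1)*(i2-b2)-(c2-b2)*(i1-b1)) := by
    linear_combination (c2*c + c2*b + c2*a - b2*c - b2*b - b2*a)*hrI1 + (-c1*c - c1*b - c1*a + b1*c + b1*b + b1*a)*hrI2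
  have hdd0 : (-b2*c1*a*c - b2*c1*a*b - b2*c1*a^2 + b1*c2*a*c + b1*c2*a*b + b1*c2*a^2) ≠ 0 := by
    rw [hDD]
    exact mul_ne_zero (pow_ne_zero _ hk) (fun h => hdN (by linear_combination -h))
  have keyx : (4*(b1*c2-b2*c1))*((-b2*c1*a*c - b2*c1*a*b - b2*c1*a^2 + b1*c2*a*c + b1*c2*a*b + b1*c2*a^2))*
      ((b*b1+c*c1)*(2*o1-nn1)+(b*b2+c*c2)*(2*o2-nn2)) = 0 := by
    linear_combination (4*b2^2*c1^2*a*b*c + 4*b2^2*c1^2*a*b^2 + 4*b2^2*c1^2*a^2*b - 8*b1*b2*c1*c2*a*b*c - 8*b1*b2*c1*c2*a*b^2 - 8*b1*b2*c1*c2*a^2*b + 4*b1^2*c2^2*a*b*c + 4*b1^2*c2^2*a*b^2 + 4*b1^2*c2^2*a^2*b)*hf1 + (4*b2^2*c1^2*a*c^2 + 4*b2^2*c1^2*a*b*c + 4*b2^2*c1^2*a^2*c - 8*b1*b2*c1*c2*a*c^2 - 8*b1*b2*c1*c2*a*b*c - 8*b1*b2*c1*c2*a^2*c + 4*b1^2*c2^2*a*c^2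 + 4*b1^2*c2^2*a*b*c + 4*b1^2*c2^2*a^2*c)*hf2 + (-2*b2^2*c1^2*c^3 - 4*b2^2*c1^2*b*c^2 - 2*b2^2*c1^2*b^2*c - 4*b2^2*c1^2*a*c^2 - 4*b2^2*c1^2*a*b*c - 2*b2^2*c1^2*a^2*c + 4*b1*b2*c1*c2*c^3 + 8*b1*b2*c1*c2*b*c^2 + 4*b1*b2*c1*c2*b^2*c + 8*b1*b2*c1*c2*a*c^2 + 8*b1*b2*c1*c2*a*b*c + 4*b1*b2*c1*c2*a^2*c - 2*b1^2*c2^2*c^3 - 4*b1^2*c2^2*b*c^2 - 2*b1^2*c2^2*b^2*c - 4*b1^2*c2^2*a*c^2 - 4*b1^2*c2^2*a*b*c - 2*b1^2*c2^2*a^2*c)*hn1 + (2*b2^2*c1^2*c + 2*b2^2*c1^2*b - 4*b1*b2*c1*c2*c - 4*b1*b2*c1*c2*b + 2*b1^2*c2^2*c + 2*b1^2*c2^2*b)*hn2x + (2*b2^2*c1^2*c2^2*c + 2*b2^2*c1^4*c + 2*b2^4*c1^2*b - 4*b1*b2*c1*c2^3*c - 4*b1*b2*c1^3*c2*c - 4*b1*b2^3*c1*c2*b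 + 2*b1^2*c2^4*c + 2*b1^2*c1^2*c2^2*c + 2*b1^2*b2^2*c2^2*b + 2*b1^2*b2^2*c1^2*b - 4*b1^3*b2*c1*c2*b + 2*b1^4*c2^2*b)*hra + (-2*b2^2*c1^2*c2^2*c - 2*b2^2*c1^4*c + 4*b2^3*c1^2*c2*c - 2*b2^4*c1^2*c + 4*b1*b2*c1*c2^3*c + 4*b1*b2*c1^3*c2*c - 8*b1*b2^2*c1*c2^2*c + 4*b1*b2^2*c1^3*c + 4*b1*b2^3*c1*c2*c - 2*b1^2*c2^4*c - 2*b1^2*c1^2*c2^2*c + 4*b1^2*b2*c2^3*c - 8*b1^2*b2*c1^2*c2*c - 2*b1^2*b2^2*c2^2*c - 2*b1^2*b2^2*c1^2*c + 4*b1^3*c1*c2^2*c + 4*b1^3*b2*c1*c2*c - 2*b1^4*c2^2*c)*hrb + (-2*b2^2*c1^2*c2^2*b - 2*b2^2*c1^4*b + 4*b2^3*c1^2*c2*b - 2*b2^4*c1^2*b + 4*b1*b2*c1*c2^3*b + 4*b1*b2*c1^3*c2*b - 8*b1*b2^2*c1*c2^2*b + 4*b1*b2^2*c1^3*b + 4*b1*b2^3*c1*c2*b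 - 2*b1^2*c2^4*b - 2*b1^2*c1^2*c2^2*b + 4*b1^2*b2*c2^3*b - 8*b1^2*b2*c1^2*c2*b - 2*b1^2*b2^2*c2^2*b - 2*b1^2*b2^2*c1^2*b + 4*b1^3*c1*c2^2*b + 4*b1^3*b2*c1*c2*b - 2*b1^4*c2^2*b)*hrc
  have key0 : ((a+b+c)*((4*(b1*c2-b2*c1))*((-b2*c1*a*c - b2*c1*a*b - b2*c1*a^2 + b1*c2*a*c + b1*c2*a*b + b1*c2*a^2))))*
      (i1*(2*o1-nn1)+i2*(2*o2-nn2)) = 0 := by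
    linear_combination keyx + ((4*(b1*c2-b2*c1))*((-b2*c1*a*c - b2*c1*a*b - b2*c1*a^2 + b1*c2*a*c + b1*c2*a*b + b1*c2*a^2))*(2*o1-nn1))*hrI1
      + ((4*(b1*c2-b2*c1))*((-b2*c1*a*c - b2*c1*a*b - b2*c1*a^2 + b1*c2*a*c + b1*c2*a*b + b1*c2*a^2))*(2*o2-nn2))*hrI2
  have key : i1*(2*o1-nn1)+i2*(2*o2-nn2) = 0 :=
    cancel0 (mul_ne_zero hk (mul_ne_zero
      (mul_ne_zero (by norm_num : (4:ℝ) ≠ 0) hdO) hdd0)) key0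
  rw [hQ1, hQ2, hH1, hH2]
  linear_combination key

/-- `AI` is perpendicular to `H O_a`. -/
theorem ai_perp_h_oa (A B C I H HA Oa : EuclideanSpace ℝ (Fin 2))
    (hABC : AffineIndependent ℝ ![A, B, C])
    (a b c s : ℝ)
    (ha : a = dist B C) (hb : b = dist C A) (hc : c = dist A B)
    (hs : s = (a + b + c) / 2)
    (hI : I = (2 * s)⁻¹ • (a • A + b • B + c • C))
    (hH : H = orthocenter3 A B C hABC)
    (hBIC : AffineIndependent ℝ ![B, I, C])
    (hHA : HA = orthocenter3 B I C hBIC)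
    (ha' : AffineIndependent ℝ ![HA, B, C])
    (hOa : Oa = circumcenter3 HA B C ha') :
    ⟪I - A, Oa - H⟫_ℝ = 0 := by
  set O : EuclideanSpace ℝ (Fin 2) := circumcenter3 A B C hABC with hO
  set N : EuclideanSpace ℝ (Fin 2) := circumcenter3 B I C hBIC with hN
  have ce1' := ortho_perpA A B C hABC
  rw [← hH, inner_coords] at ce1'
  simp only [PiLp.sub_apply] at ce1'
  have ce2' := ortho_perpB A B C hABC
  rw [← hH, inner_coords] at ce2'
  simp only [PiLp.sub_apply] at ce2'
  have ce3' := ortho_perpA B I C hBIC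
  rw [← hHA, inner_coords] at ce3'
  simp only [PiLp.sub_apply] at ce3'
  have ce4' := ortho_perpB B I C hBIC
  rw [← hHA, inner_coords] at ce4'
  simp only [PiLp.sub_apply] at ce4'
  obtain ⟨cfa, cfb⟩ := circum_eq A B C hABC
  rw [← hO] at cfa cfb
  have cf1' : dist A O ^ 2 = dist B O ^ 2 := by rw [cfa]
  have cf2' : dist A O ^ 2 = dist C O ^ 2 := by rw [cfb]
  rw [dist_sq_coords, dist_sq_coords] at cf1' cf2'
  obtain ⟨cna, cnb⟩ := circum_eq B I C hBIC
  rw [← hN] at cna cnb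
  have cn1' : dist B N ^ 2 = dist C N ^ 2 := by rw [← cnb, cna]
  have cn2' : dist B N ^ 2 = dist I N ^ 2 := by rw [← cna]
  rw [dist_sq_coords, dist_sq_coords] at cn1' cn2'
  obtain ⟨cqa, cqb⟩ := circum_eq HA B C ha'
  rw [← hOa] at cqa cqb
  have ce5' : dist HA Oa ^ 2 = dist B Oa ^ 2 := by rw [cqa]
  have ce6' : dist HA Oa ^ 2 = dist C Oa ^ 2 := by rw [cqb]
  rw [dist_sq_coords, dist_sq_coords] at ce5' ce6'
  have cra' : a ^ 2 = (B 0 - C 0) ^ 2 + (B 1 - C 1) ^ 2 := by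
    rw [ha, dist_sq_coords]
  have crb' : b ^ 2 = (C 0 - A 0) ^ 2 + (C 1 - A 1) ^ 2 := by
    rw [hb, dist_sq_coords]
  have crc' : c ^ 2 = (A 0 - B 0) ^ 2 + (A 1 - B 1) ^ 2 := by
    rw [hc, dist_sq_coords]
  have hBC : B ≠ C := by
    intro hbc
    exact (hABC.injective.ne (show (1 : Fin 3) ≠ 2 by decide)) (by simpa using hbc)
  have hapos : 0 < a := by rw [ha]; exact dist_pos.mpr hBC
  have hk : a + b + c ≠ 0 := by
    have hb0 : 0 ≤ b := hb ▸ dist_nonneg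
    have hc0 : 0 ≤ c := hc ▸ dist_nonneg
    positivity
  have h2s : 2 * s = a + b + c := by rw [hs]; ring
  have hI0 : (a + b + c) * I 0 = a * A 0 + b * B 0 + c * C 0 := by
    rw [hI]
    simp only [PiLp.smul_apply, PiLp.add_apply, smul_eq_mul, h2s]
    field_simp
  have hI1 : (a + b + c) * I 1 = a * A 1 + b * B 1 + c * C 1 := by
    rw [hI]
    simp only [PiLp.smul_apply, PiLp.add_apply, smul_eq_mul, h2s]
    field_simp
  have hdO' := cross_ne_zero hABC
  have hdN' := cross_ne_zero hBIC
  have hd'  := cross_ne_zero ha'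
  have main := main_alg (B 0 - A 0) (B 1 - A 1) (C 0 - A 0) (C 1 - A 1)
    (I 0 - A 0) (I 1 - A 1) (O 0 - A 0) (O 1 - A 1) (N 0 - A 0) (N 1 - A 1)
    (H 0 - A 0) (H 1 - A 1) (HA 0 - A 0) (HA 1 - A 1) (Oa 0 - A 0) (Oa 1 - A 1)
    a b c
    (by linear_combination ce1') (by linear_combination ce2')
    (by linear_combination ce3') (by linear_combination -ce4')
    (by linear_combination cf1') (by linear_combination cf2')
    (by linear_combination cn1') (by linear_combination cn2')
    (by linear_combination ce5') (by linear_combination ce6')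
    (by linear_combination cra') (by linear_combination crb') (by linear_combination crc')
    (by linear_combination hI0) (by linear_combination hI1)
    hk
    (fun h => hdO' (by linear_combination h))
    (fun h => hdN' (by linear_combination h))
    (fun h => hd' (by linear_combination h))
  rw [inner_coords]
  simp only [PiLp.sub_apply]
  linear_combination main
end
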